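/- arXiv:1311.4841 — 6 statements merged into one kernel-verified Lean document; each statement's English description precedes it below -/
import Mathlib

section
/- Let J be a finite group and M a finitely generated J-module that is free as a ℤ-module. The norm map N : M^∨ → M^∨, f ↦ ∑_{σ∈J} σ·f, kills the augmentation submodule 𝔄_J(M^∨) and hence descends to a surjection (M^∨)_J ↠ N(M^∨) onto the image of the norm; the kernel of this surjection is isomorphic to the Pontryagin dual H¹(J,M)^D of the first cohomology group of M, i.e., there is a short exact sequence 0 → H¹(J,M)^D → (M^∨)_J → N(M^∨) → 0. -/
variable (J M : Type) [Group J] [Fintype J] [AddCommGroup M] [DistribMulAction J M]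

/-- The augmentation submodule `𝔄_J (M^∨)` of the linear dual `M^∨ = Hom_ℤ(M, ℤ)`, for the
action `(σ · f) (m) = f (σ⁻¹ • m)`; it is generated by the elements `σ · f - f`, and the
coinvariants `(M^∨)_J` are the quotient of `M^∨` by this subgroup. -/
def dualAug : AddSubgroup (M →+ ℤ) :=
  AddSubgroup.closure
    {g | ∃ (σ : J) (f : M →+ ℤ), f.comp (DistribMulAction.toAddMonoidHom M σ⁻¹) - f = g}

/-- The norm map `N : M^∨ → M^∨`, `f ↦ ∑_{σ ∈ J} σ · f`, where `(σ · f)(m) = f(σ⁻¹ • m)`. -/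
def dualNorm : (M →+ ℤ) →+ (M →+ ℤ) where
  toFun f := ∑ σ : J, f.comp (DistribMulAction.toAddMonoidHom M σ⁻¹)
  map_zero' := by simp
  map_add' f g := by
    simp [AddMonoidHom.add_comp, Finset.sum_add_distrib]

instance : SMulCommClass J ℤ M :=
  ⟨fun g n m => ((DistribMulAction.toAddMonoidHom M g).map_zsmul n m)⟩

namespace DNK

noncomputable abbrev AA : Rep ℤ J := Rep.of (Representation.ofDistribMulAction ℤ J M)

/-- view a cocycle as a function `J → M` -/
def cv (c : groupCohomology.cocycles₁ (AA J M)) : J → M := c.1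

lemma cv_add (c d : groupCohomology.cocycles₁ (AA J M)) :
    cv J M (c + d) = cv J M c + cv J M d := rfl

lemma cv_zero : cv J M 0 = 0 := rfl

noncomputable def toCirc : ℚ →+ AddCircle (1 : ℚ) :=
  QuotientAddGroup.mk' (AddSubgroup.zmultiples (1 : ℚ))

lemma toCirc_eq_zero_iff (x : ℚ) : toCirc x = 0 ↔ ∃ k : ℤ, x = k := by
  rw [toCirc, QuotientAddGroup.mk'_apply, QuotientAddGroup.eq_zero_iff,
    AddSubgroup.mem_zmultiples_iff]
  simp [eq_comm]

lemma toCirc_int (k : ℤ) : toCirc (k : ℚ) = 0 := (toCirc_eq_zero_iff _).2 ⟨k, rfl⟩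

lemma hn : (Fintype.card J : ℚ) ≠ 0 := by exact_mod_cast Fintype.card_ne_zero

/-- The pairing `f ↦ (c ↦ (1/n) ∑_σ f(c σ) mod ℤ)`. -/
noncomputable def P : (M →+ ℤ) →+ ((groupCohomology.cocycles₁ (AA J M)) →+ AddCircle (1 : ℚ)) where
  toFun f :=
  { toFun := fun c => toCirc ((∑ σ : J, (f (cv J M c σ) : ℚ)) / (Fintype.card J : ℚ))
    map_zero' := by simp [cv_zero]
    map_add' := fun c d => by
      simp only [cv_add, Pi.add_apply, map_add, Int.cast_add, Finset.sum_add_distrib,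
        add_div] }
  map_zero' := by ext c; simp
  map_add' f g := by
    ext c
    show toCirc _ = toCirc _ + toCirc _
    simp only [AddMonoidHom.add_apply, Int.cast_add, Finset.sum_add_distrib, add_div, map_add]

lemma P_apply (f : M →+ ℤ) (c : groupCohomology.cocycles₁ (AA J M)) :
    P J M f c = toCirc ((∑ σ : J, (f (cv J M c σ) : ℚ)) / (Fintype.card J : ℚ)) := rfl

lemma cocycle_rel (c : groupCohomology.cocycles₁ (AA J M)) (g h : J) :
    cv J M c (g * h) = g • (cv J M c h) + cv J M c g :=
  (groupCohomology.mem_cocycles₁_iff (A := AA J M) c.1).1 c.2 g h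

theorem P_kills_aug : ∀ g ∈ dualAug J M, P J M g = 0 := by
  have : dualAug J M ≤ (P J M).ker := by
    rw [dualAug, AddSubgroup.closure_le]
    rintro g ⟨σ, f, rfl⟩
    simp only [SetLike.mem_coe, AddMonoidHom.mem_ker]
    ext c
    rw [P_apply]
    have key : ∀ τ : J, ((f.comp (DistribMulAction.toAddMonoidHom M σ⁻¹) - f) (cv J M c τ) : ℚ)
        = (f (cv J M c (σ⁻¹ * τ)) : ℚ) - f (cv J M c σ⁻¹) - f (cv J M c τ) := by
      intro τ
      have h2 : σ⁻¹ • (cv J M c τ) = cv J M c (σ⁻¹ * τ) - cv J M c σ⁻¹ := by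
        rw [cocycle_rel J M c σ⁻¹ τ]; abel
      show ((f (σ⁻¹ • (cv J M c τ)) - f (cv J M c τ) : ℤ) : ℚ) = _
      rw [h2, map_sub]
      push_cast
      ring
    have sum1 : ∑ τ : J, (f (cv J M c (σ⁻¹ * τ)) : ℚ) = ∑ τ : J, (f (cv J M c τ) : ℚ) :=
      Fintype.sum_equiv (Equiv.mulLeft σ⁻¹) _ _ (fun τ => rfl)
    have key2 : (∑ τ : J, ((f.comp (DistribMulAction.toAddMonoidHom M σ⁻¹) - f) (cv J M c τ) : ℚ))
        = -(Fintype.card J : ℚ) * (f (cv J M c σ⁻¹) : ℚ) := by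
      rw [Finset.sum_congr rfl (fun τ _ => key τ), Finset.sum_sub_distrib,
        Finset.sum_sub_distrib, sum1]
      simp [Finset.sum_const]
    rw [key2]
    have h3 : -(Fintype.card J : ℚ) * (f (cv J M c σ⁻¹) : ℚ) / (Fintype.card J : ℚ)
        = ((-(f (cv J M c σ⁻¹)) : ℤ) : ℚ) := by
      field_simp
      simp
    rw [h3, toCirc_int]
    rfl
  exact fun g hg => this hg



lemma dualNorm_apply (f : M →+ ℤ) (m : M) :
    dualNorm J M f m = ∑ σ : J, f (σ⁻¹ • m) := by
  show (∑ σ : J, f.comp (DistribMulAction.toAddMonoidHom M σ⁻¹)) m = _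
  rw [AddMonoidHom.finset_sum_apply]
  rfl

theorem norm_kills_aug : ∀ g ∈ dualAug J M, dualNorm J M g = 0 := by
  have : dualAug J M ≤ (dualNorm J M).ker := by
    rw [dualAug, AddSubgroup.closure_le]
    rintro g ⟨σ, f, rfl⟩
    simp only [SetLike.mem_coe, AddMonoidHom.mem_ker, map_sub, sub_eq_zero]
    ext m
    rw [dualNorm_apply, dualNorm_apply]
    refine Fintype.sum_equiv (Equiv.mulRight σ) _ _ (fun τ => ?_)
    simp [mul_smul]
  exact fun g hg => this hg

/-- the descended norm map on coinvariants -/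
noncomputable def q : ((M →+ ℤ) ⧸ dualAug J M) →+ (M →+ ℤ) :=
  QuotientAddGroup.lift (dualAug J M) (dualNorm J M) (norm_kills_aug J M)

lemma q_mk (f : M →+ ℤ) : q J M (QuotientAddGroup.mk f) = dualNorm J M f := rfl

/-- the pairing descended to coinvariants -/
noncomputable def Pbar : ((M →+ ℤ) ⧸ dualAug J M) →+
    ((groupCohomology.cocycles₁ (AA J M)) →+ AddCircle (1 : ℚ)) :=
  QuotientAddGroup.lift (dualAug J M) (P J M) (P_kills_aug J M)

lemma Pbar_mk (f : M →+ ℤ) : Pbar J M (QuotientAddGroup.mk f) = P J M f := rfl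

/-- if `N f = 0` then the pairing kills coboundaries -/
lemma P_kills_coboundaries {f : M →+ ℤ} (hf : dualNorm J M f = 0)
    {b : groupCohomology.cocycles₁ (AA J M)}
    (hb : b.1 ∈ groupCohomology.coboundaries₁ (AA J M)) : P J M f b = 0 := by
  obtain ⟨x, hx⟩ := hb
  have hx' : ∀ g : J, g • (show M from x) - (show M from x) = cv J M b g := fun g => congrFun hx g
  have sum0 : ∑ σ : J, (f (σ • (show M from x)) : ℚ) = 0 := by
    have : ∑ σ : J, f (σ • (show M from x)) = dualNorm J M f x := by
      rw [dualNorm_apply]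
      exact (Fintype.sum_equiv (Equiv.inv J) _ _ (fun σ => rfl)).symm
    rw [hf] at this
    simp only [AddMonoidHom.zero_apply] at this
    rw [← Int.cast_sum, this, Int.cast_zero]
  rw [P_apply]
  have : (∑ σ : J, (f (cv J M b σ) : ℚ))
      = -(Fintype.card J : ℚ) * (f x : ℚ) := by
    have : ∀ σ : J, (f (cv J M b σ) : ℚ) = (f (σ • (show M from x)) : ℚ) - (f x : ℚ) := by
      intro σ
      rw [← hx' σ, map_sub]
      push_cast; ring
    rw [Finset.sum_congr rfl (fun σ _ => this σ), Finset.sum_sub_distrib, sum0]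
    simp [Finset.sum_const]
  rw [this]
  have h3 : -(Fintype.card J : ℚ) * (f x : ℚ) / (Fintype.card J : ℚ)
      = ((-(f x) : ℤ) : ℚ) := by
    field_simp
    simp
  rw [h3, toCirc_int]

/-- coboundaries as a submodule of the cocycles -/
noncomputable def B1 : Submodule ℤ (groupCohomology.cocycles₁ (AA J M)) :=
  (groupCohomology.coboundaries₁ (AA J M)).comap (groupCohomology.cocycles₁ (AA J M)).subtype

lemma H1π_surj (y : groupCohomology.H1 (AA J M)) :
    ∃ c : groupCohomology.cocycles₁ (AA J M), groupCohomology.H1π (AA J M) c = y :=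
  groupCohomology.H1_induction_on y (fun c => ⟨c, rfl⟩)

lemma B1_eq_ker : B1 J M = LinearMap.ker (groupCohomology.H1π (AA J M)).hom := by
  ext c
  simp only [B1, Submodule.mem_comap, LinearMap.mem_ker]
  exact (groupCohomology.H1π_eq_zero_iff c).symm

/-- `H¹` as the quotient of cocycles by coboundaries -/
noncomputable def eH : ((groupCohomology.cocycles₁ (AA J M)) ⧸ B1 J M) ≃ₗ[ℤ]
    groupCohomology.H1 (AA J M) :=
  (Submodule.quotEquivOfEq _ _ (B1_eq_ker J M)).trans
    (LinearMap.quotKerEquivOfSurjective _ (fun y => H1π_surj J M y))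

lemma Pbar_kills_coboundaries {x : (M →+ ℤ) ⧸ dualAug J M} (hx : q J M x = 0) :
    B1 J M ≤
      LinearMap.ker (Pbar J M x).toIntLinearMap := by
  obtain ⟨f, rfl⟩ := QuotientAddGroup.mk_surjective x
  intro b hb
  exact P_kills_coboundaries J M (by rw [← q_mk]; exact hx) hb

/-- the map from a kernel element to a character of `H¹` -/
noncomputable def ThetaFun (x : (M →+ ℤ) ⧸ dualAug J M) (hx : q J M x = 0) :
    (groupCohomology.H1 (AA J M)) →+ AddCircle (1 : ℚ) :=
  ((Submodule.liftQ (B1 J M)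
    (Pbar J M x).toIntLinearMap (Pbar_kills_coboundaries J M hx)).comp
      (eH J M).symm.toLinearMap).toAddMonoidHom

lemma ThetaFun_mk (x : (M →+ ℤ) ⧸ dualAug J M) (hx : q J M x = 0)
    (c : groupCohomology.cocycles₁ (AA J M)) :
    ThetaFun J M x hx (groupCohomology.H1π (AA J M) c) = Pbar J M x c := by
  have : (eH J M).symm (groupCohomology.H1π (AA J M) c) = Submodule.Quotient.mk c := by
    rw [LinearEquiv.symm_apply_eq]; rfl
  show Submodule.liftQ (B1 J M) (Pbar J M x).toIntLinearMap (Pbar_kills_coboundaries J M hx)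
      ((eH J M).symm _) = _
  rw [this]; rfl

noncomputable def Theta : (q J M).ker →+
    ((groupCohomology.H1 (AA J M)) →+ AddCircle (1 : ℚ)) where
  toFun x := ThetaFun J M x.1 x.2
  map_zero' := by
    ext y
    obtain ⟨c, rfl⟩ := H1π_surj J M y
    show ThetaFun J M (0 : (q J M).ker).1 (AddMonoidHom.mem_ker.1 (0 : (q J M).ker).2) _ = _
    rw [ThetaFun_mk]
    simp
  map_add' x y := by
    ext z
    obtain ⟨c, rfl⟩ := H1π_surj J M z
    show ThetaFun J M (x + y).1 (AddMonoidHom.mem_ker.1 (x + y).2) _ =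
      ThetaFun J M x.1 (AddMonoidHom.mem_ker.1 x.2) _ + ThetaFun J M y.1 (AddMonoidHom.mem_ker.1 y.2) _
    rw [ThetaFun_mk, AddSubgroup.coe_add, map_add, ThetaFun_mk, ThetaFun_mk]
    rfl

/-- turn an integer-valued rational linear form into a `ℤ`-valued one -/
lemma exists_intHom {N : Type} [AddCommGroup N] [Module ℤ N] (g : N →ₗ[ℤ] ℚ)
    (hg : ∀ x, ∃ k : ℤ, g x = k) : ∃ G : N →ₗ[ℤ] ℤ, ∀ x, (G x : ℚ) = g x := by
  choose k hk using hg
  refine ⟨{ toFun := k, map_add' := ?_, map_smul' := ?_ }, fun x => (hk x).symm⟩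
  · intro a b
    have h1 := hk (a + b)
    rw [map_add, hk a, hk b] at h1
    exact_mod_cast h1.symm
  · intro m a
    simp only [RingHom.id_apply, smul_eq_mul]
    have h1 := g.map_smul m a
    rw [hk _, hk a] at h1
    rw [zsmul_eq_mul] at h1
    exact_mod_cast h1

/-- the "coboundary" map `m ↦ (σ ↦ σ • m - m)` -/
def DD : M →+ (J → M) where
  toFun m := fun σ => σ • m - m
  map_zero' := by funext σ; simp
  map_add' a b := by
    funext σ
    show σ • (a + b) - (a + b) = (σ • a - a) + (σ • b - b)
    rw [smul_add]
    abel

/-- `m ↦ F (σ ↦ σ • m - m)` lies in the augmentation subgroup, for any `F`. -/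
lemma comp_dZero_mem_aug (F : (J → M) →+ ℤ) :
    F.comp (DD J M) ∈ dualAug J M := by
  classical
  have key : F.comp (DD J M) = ∑ σ : J,
      ((F.comp (AddMonoidHom.single (fun _ : J => M) σ)).comp
        (DistribMulAction.toAddMonoidHom M σ⁻¹⁻¹)
       - F.comp (AddMonoidHom.single (fun _ : J => M) σ)) := by
    ext m
    rw [AddMonoidHom.finset_sum_apply]
    have step : ∀ σ : J, ((F.comp (AddMonoidHom.single (fun _ : J => M) σ)).comp
        (DistribMulAction.toAddMonoidHom M σ⁻¹⁻¹)
       - F.comp (AddMonoidHom.single (fun _ : J => M) σ)) m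
        = F (Pi.single σ (σ • m - m)) := by
      intro σ
      show F (Pi.single σ (σ⁻¹⁻¹ • m)) - F (Pi.single σ m) = _
      rw [inv_inv, ← map_sub]
      congr 1
      funext τ
      by_cases h : τ = σ
      · subst h; simp
      · simp [Pi.single_eq_of_ne h]
    rw [Finset.sum_congr rfl (fun σ _ => step σ), ← map_sum]
    show F (DD J M m) = _
    congr 1
    exact (Finset.univ_sum_single (DD J M m)).symm
  rw [key]
  exact AddSubgroup.sum_mem _ (fun σ _ => AddSubgroup.subset_closure
    ⟨σ⁻¹, F.comp (AddMonoidHom.single (fun _ : J => M) σ), rfl⟩)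

lemma sum_norm_zero (f : M →+ ℤ) (h1 : dualNorm J M f = 0) (m : M) :
    ∑ σ : J, (f (σ • m) : ℚ) = 0 := by
  have h0 : ∑ σ : J, f (σ • m) = dualNorm J M f m := by
    rw [dualNorm_apply]
    exact (Fintype.sum_equiv (Equiv.inv J) _ _ (fun σ => rfl)).symm
  rw [h1] at h0
  simp only [AddMonoidHom.zero_apply] at h0
  rw [← Int.cast_sum, h0, Int.cast_zero]

/-- the cocycle submodule with ambient type `J → M` -/
noncomputable def Z1' : Submodule ℤ (J → M) := groupCohomology.cocycles₁ (AA J M)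

/-- `dOne` with `M`-types -/
noncomputable def d1' : (J → M) →ₗ[ℤ] (J × J → M) := (groupCohomology.d₁₂ (AA J M)).hom

lemma mem_Z1'_iff (c : J → M) : c ∈ Z1' J M ↔ d1' J M c = 0 := Iff.rfl

/-- `dZero` with `M`-types -/
noncomputable def d0' : M →ₗ[ℤ] (J → M) := (groupCohomology.d₀₁ (AA J M)).hom

lemma d0'_apply (m : M) : d0' J M m = fun σ => σ • m - m := rfl

section Free
variable [Module.Finite ℤ M] [Module.Free ℤ M]

noncomputable def psi (f : M →+ ℤ) : (J → M) →ₗ[ℤ] ℚ where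
  toFun h := -((∑ σ : J, (f (h σ) : ℚ)) / (Fintype.card J : ℚ))
  map_add' a b := by
    simp only [Pi.add_apply, map_add, Int.cast_add, Finset.sum_add_distrib, add_div, neg_add]
  map_smul' k a := by
    simp only [Pi.smul_apply, RingHom.id_apply, smul_eq_mul]
    have h6 : ∀ σ : J, (f (k • a σ) : ℚ) = (k : ℚ) * (f (a σ) : ℚ) := by
      intro σ
      rw [f.map_zsmul, zsmul_eq_mul]
      push_cast
      ring
    rw [Finset.sum_congr rfl (fun σ _ => h6 σ), ← Finset.mul_sum, zsmul_eq_mul]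
    push_cast
    ring

set_option maxHeartbeats 1000000 in
theorem mem_aug_of_pairing (f : M →+ ℤ) (h1 : dualNorm J M f = 0)
    (h2 : ∀ c : groupCohomology.cocycles₁ (AA J M),
      (Fintype.card J : ℤ) ∣ ∑ σ : J, f (cv J M c σ)) :
    f ∈ dualAug J M := by
  classical
  have tf : NoZeroSMulDivisors ℤ ((J → M) ⧸ Z1' J M) := by
    constructor
    intro k x hkx
    obtain ⟨y, rfl⟩ := Submodule.Quotient.mk_surjective _ x
    rw [← Submodule.Quotient.mk_smul, Submodule.Quotient.mk_eq_zero] at hkx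
    by_cases hk : k = 0
    · exact Or.inl hk
    · refine Or.inr ?_
      rw [Submodule.Quotient.mk_eq_zero]
      rw [mem_Z1'_iff, map_smul] at hkx
      rw [mem_Z1'_iff]
      exact (smul_eq_zero.1 hkx).resolve_left hk
  haveI := tf
  obtain ⟨s, hs⟩ := Module.projective_lifting_property
    (Z1' J M).mkQ LinearMap.id (Submodule.mkQ_surjective _)
  have hint : ∀ c : Z1' J M, ∃ k : ℤ, (psi J M f ∘ₗ (Z1' J M).subtype) c = k := by
    intro c
    obtain ⟨k, hk⟩ := h2 ⟨c.1, c.2⟩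
    refine ⟨-k, ?_⟩
    show -((∑ σ : J, (f (c.1 σ) : ℚ)) / (Fintype.card J : ℚ)) = ((-k : ℤ) : ℚ)
    have hc : (∑ σ : J, (f (c.1 σ) : ℚ)) = ((Fintype.card J : ℤ) : ℚ) * (k : ℚ) := by
      rw [← Int.cast_sum]
      exact_mod_cast congrArg (fun z : ℤ => (z : ℚ)) hk
    rw [hc]
    push_cast
    field_simp
  obtain ⟨G, hG⟩ := exists_intHom (psi J M f ∘ₗ (Z1' J M).subtype) hint
  have hr : ∀ x : J → M, ((LinearMap.id : (J → M) →ₗ[ℤ] (J → M)) - s ∘ₗ (Z1' J M).mkQ) x ∈ Z1' J M := by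
    intro x
    have h4 : (Z1' J M).mkQ (((LinearMap.id : (J → M) →ₗ[ℤ] (J → M)) - s ∘ₗ (Z1' J M).mkQ) x) = 0 := by
      have h5 := LinearMap.congr_fun hs ((Z1' J M).mkQ x)
      simp only [LinearMap.comp_apply, LinearMap.id_apply] at h5
      simp only [LinearMap.sub_apply, LinearMap.comp_apply, LinearMap.id_apply, map_sub]
      rw [h5, sub_self]
    rwa [Submodule.mkQ_apply, Submodule.Quotient.mk_eq_zero] at h4
  have hf : f = ((G ∘ₗ LinearMap.codRestrict (Z1' J M)
      ((LinearMap.id : (J → M) →ₗ[ℤ] (J → M)) - s ∘ₗ (Z1' J M).mkQ) hr).toAddMonoidHom).comp (DD J M) := by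
    ext m
    have hmem : DD J M m ∈ Z1' J M := by
      rw [mem_Z1'_iff]
      exact groupCohomology.d₀₁_apply_mem_cocycles₁ (A := AA J M) m
    have hq0 : (Z1' J M).mkQ (DD J M m) = 0 := by
      rwa [Submodule.mkQ_apply, Submodule.Quotient.mk_eq_zero]
    have harg : LinearMap.codRestrict (Z1' J M) ((LinearMap.id : (J → M) →ₗ[ℤ] (J → M)) - s ∘ₗ (Z1' J M).mkQ) hr
        (DD J M m) = ⟨DD J M m, hmem⟩ := by
      apply Subtype.ext
      show ((LinearMap.id : (J → M) →ₗ[ℤ] (J → M)) - s ∘ₗ (Z1' J M).mkQ) (DD J M m) = DD J M m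
      simp only [LinearMap.sub_apply, LinearMap.comp_apply, LinearMap.id_apply]
      rw [hq0, map_zero, sub_zero]
    have hFval : ((G ∘ₗ LinearMap.codRestrict (Z1' J M)
        ((LinearMap.id : (J → M) →ₗ[ℤ] (J → M)) - s ∘ₗ (Z1' J M).mkQ) hr) (DD J M m) : ℚ)
        = psi J M f (DD J M m) := by
      rw [LinearMap.comp_apply, harg, hG ⟨DD J M m, hmem⟩]
      rfl
    have hψval : psi J M f (DD J M m) = (f m : ℚ) := by
      show -((∑ σ : J, (f (σ • m - m) : ℚ)) / (Fintype.card J : ℚ)) = (f m : ℚ)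
      have h7 : ∀ σ : J, (f (σ • m - m) : ℚ) = (f (σ • m) : ℚ) - (f m : ℚ) := by
        intro σ
        rw [map_sub]
        push_cast
        ring
      rw [Finset.sum_congr rfl (fun σ _ => h7 σ), Finset.sum_sub_distrib,
        sum_norm_zero J M f h1 m]
      simp only [Finset.sum_const, Finset.card_univ, nsmul_eq_mul, zero_sub]
      field_simp
    show f m = (G ∘ₗ LinearMap.codRestrict (Z1' J M)
        ((LinearMap.id : (J → M) →ₗ[ℤ] (J → M)) - s ∘ₗ (Z1' J M).mkQ) hr) (DD J M m)
    have h8 : (f m : ℚ) = ((G ∘ₗ LinearMap.codRestrict (Z1' J M)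
        ((LinearMap.id : (J → M) →ₗ[ℤ] (J → M)) - s ∘ₗ (Z1' J M).mkQ) hr) (DD J M m) : ℚ) := by
      rw [hFval, hψval]
    exact_mod_cast h8
  rw [hf]
  exact comp_dZero_mem_aug J M _

set_option maxHeartbeats 1000000 in
theorem exists_preimage (φ : groupCohomology.H1 (AA J M) →+ AddCircle (1 : ℚ)) :
    ∃ f : M →+ ℤ, dualNorm J M f = 0 ∧
      ∀ c : groupCohomology.cocycles₁ (AA J M),
        P J M f c = φ (groupCohomology.H1π (AA J M) c) := by
  classical
  have hφ' : ∃ φ' : CharacterModule (Z1' J M), ∀ c : groupCohomology.cocycles₁ (AA J M),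
      φ' ⟨c.1, c.2⟩ = φ (groupCohomology.H1π (AA J M) c) :=
    ⟨φ.comp ((groupCohomology.H1π (AA J M)).hom.toAddMonoidHom), fun c => rfl⟩
  obtain ⟨φ', hφ'⟩ := hφ'
  obtain ⟨φhat, hext⟩ := CharacterModule.dual_surjective_of_injective
    ((Z1' J M).subtype) (Submodule.injective_subtype _) φ'
  have hext' : ∀ c : Z1' J M, φhat c.1 = φ' c := fun c => DFunLike.congr_fun hext c
  have φh : ∃ φh : (J → M) →+ AddCircle (1 : ℚ), ∀ x, φh x = φhat x := ⟨φhat, fun _ => rfl⟩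
  obtain ⟨φh, hφh⟩ := φh
  have toCircSurj : Function.Surjective (toCirc.toIntLinearMap :
      ℚ →ₗ[ℤ] AddCircle (1 : ℚ)) := QuotientAddGroup.mk'_surjective _
  obtain ⟨ψ, hψ⟩ := Module.projective_lifting_property
    toCirc.toIntLinearMap φh.toIntLinearMap toCircSurj
  have hψ' : ∀ x : J → M, toCirc (ψ x) = φh x := fun x => LinearMap.congr_fun hψ x
  have hcob : ∀ m : M, (d0' J M m ∈ Z1' J M) ∧ ∀ hm : d0' J M m ∈ Z1' J M,
      (groupCohomology.H1π (AA J M) (⟨d0' J M m, hm⟩ : groupCohomology.cocycles₁ (AA J M)) :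
        groupCohomology.H1 (AA J M)) = 0 := by
    intro m
    have hmem : d0' J M m ∈ Z1' J M := by
      rw [mem_Z1'_iff]
      exact groupCohomology.d₀₁_apply_mem_cocycles₁ (A := AA J M) m
    refine ⟨hmem, fun hm => ?_⟩
    rw [groupCohomology.H1π_eq_zero_iff]
    exact ⟨m, rfl⟩
  have hgint : ∀ m : M, ∃ k : ℤ, (ψ ∘ₗ d0' J M) m = k := by
    intro m
    rw [← toCirc_eq_zero_iff]
    show toCirc (ψ (d0' J M m)) = 0
    rw [hψ' _, hφh _, hext' ⟨d0' J M m, (hcob m).1⟩, hφ' ⟨d0' J M m, (hcob m).1⟩]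
    rw [(hcob m).2 (hcob m).1, map_zero]
  obtain ⟨h, hh⟩ := exists_intHom (ψ ∘ₗ d0' J M) hgint
  have hh' : ∀ m : M, ((h m : ℤ) : ℚ) = ψ (d0' J M m) := fun m => hh m
  refine ⟨-h.toAddMonoidHom, ?_, ?_⟩
  · ext m
    have key0 : ∑ τ : J, d0' J M (τ⁻¹ • m) = 0 := by
      funext σ
      rw [Finset.sum_apply]
      have e1 : ∀ τ : J, d0' J M (τ⁻¹ • m) σ = (σ * τ⁻¹) • m - τ⁻¹ • m := by
        intro τ
        rw [d0'_apply]
        simp [mul_smul]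
      rw [Finset.sum_congr rfl (fun τ _ => e1 τ), Finset.sum_sub_distrib]
      have e2 : ∑ τ : J, (σ * τ⁻¹) • m = ∑ τ : J, τ • m :=
        Fintype.sum_equiv ((Equiv.inv J).trans (Equiv.mulLeft σ)) _ _ (fun τ => rfl)
      have e3 : ∑ τ : J, τ⁻¹ • m = ∑ τ : J, τ • m :=
        Fintype.sum_equiv (Equiv.inv J) _ _ (fun τ => rfl)
      rw [e2, e3, sub_self]
      rfl
    have hsum : (∑ τ : J, (h (τ⁻¹ • m) : ℚ)) = 0 := by
      have : ∀ τ : J, ((h (τ⁻¹ • m) : ℤ) : ℚ) = ψ (d0' J M (τ⁻¹ • m)) := fun τ => hh' _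
      rw [Finset.sum_congr rfl (fun τ _ => this τ), ← map_sum, key0, map_zero]
    have hsum' : (∑ τ : J, h (τ⁻¹ • m)) = 0 := by exact_mod_cast hsum
    rw [dualNorm_apply]
    show (∑ τ : J, -(h (τ⁻¹ • m))) = 0
    rw [Finset.sum_neg_distrib, hsum', neg_zero]
  · intro c
    have key : ∑ σ : J, d0' J M (cv J M c σ) = (-(Fintype.card J : ℤ)) • (c.1 : J → M) := by
      funext τ
      rw [Finset.sum_apply]
      have e1 : ∀ σ : J, d0' J M (cv J M c σ) τ
          = cv J M c (τ * σ) - cv J M c τ - cv J M c σ := by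
        intro σ
        show τ • cv J M c σ - cv J M c σ = _
        rw [cocycle_rel J M c τ σ]
        abel
      rw [Finset.sum_congr rfl (fun σ _ => e1 σ), Finset.sum_sub_distrib,
        Finset.sum_sub_distrib]
      have e2 : ∑ σ : J, cv J M c (τ * σ) = ∑ σ : J, cv J M c σ :=
        Fintype.sum_equiv (Equiv.mulLeft τ) _ _ (fun σ => rfl)
      rw [e2]
      simp only [Finset.sum_const, Finset.card_univ]
      show (∑ σ : J, cv J M c σ) - Fintype.card J • cv J M c τ - (∑ σ : J, cv J M c σ)
          = ((-(Fintype.card J : ℤ)) • (c.1 : J → M)) τ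
      have : ((-(Fintype.card J : ℤ)) • (c.1 : J → M)) τ
          = (-(Fintype.card J : ℤ)) • cv J M c τ := rfl
      rw [this, neg_smul, natCast_zsmul]
      abel
    have hsum : (∑ σ : J, ((-h.toAddMonoidHom : M →+ ℤ) (cv J M c σ) : ℚ))
        = (Fintype.card J : ℚ) * ψ c.1 := by
      have e4 : ∀ σ : J, ((-h.toAddMonoidHom : M →+ ℤ) (cv J M c σ) : ℚ)
          = -(ψ (d0' J M (cv J M c σ))) := by
        intro σ
        show ((-(h (cv J M c σ)) : ℤ) : ℚ) = _
        rw [Int.cast_neg, hh' _]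
      rw [Finset.sum_congr rfl (fun σ _ => e4 σ), Finset.sum_neg_distrib, ← map_sum, key,
        map_smul]
      simp only [zsmul_eq_mul]
      push_cast
      ring
    rw [P_apply, hsum]
    have : (Fintype.card J : ℚ) * ψ c.1 / (Fintype.card J : ℚ) = ψ c.1 := by
      field_simp
    rw [this, hψ' _, hφh _, hext' ⟨c.1, c.2⟩, hφ' c]

end Free

end DNK

/-- The norm map `N : M^∨ → M^∨` on the linear dual of a finitely generated `ℤ`-free
`J`-module `M` kills the augmentation submodule `𝔄_J (M^∨)`, hence descends to a map `q` on
the coinvariants `(M^∨)_J` whose image is the image `N(M^∨)` of the norm, and the kernel of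
`q` is isomorphic to the Pontryagin dual `H¹(J,M)^D` of the first cohomology group; i.e.
there is a short exact sequence `0 → H¹(J,M)^D → (M^∨)_J → N(M^∨) → 0`. -/
theorem dualNorm_descends_and_kernel [Module.Finite ℤ M] [Module.Free ℤ M] :
    (∀ g ∈ dualAug J M, dualNorm J M g = 0) ∧
    ∃ q : ((M →+ ℤ) ⧸ dualAug J M) →+ (M →+ ℤ),
      (∀ f : M →+ ℤ, q (QuotientAddGroup.mk f) = dualNorm J M f) ∧
      Set.range ⇑q = ↑(dualNorm J M).range ∧
      Nonempty (q.ker ≃+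
        ((groupCohomology.H1 (Rep.of (Representation.ofDistribMulAction ℤ J M))) →+
          AddCircle (1 : ℚ))) := by
  classical
  refine ⟨DNK.norm_kills_aug J M, DNK.q J M, fun f => rfl, ?_, ?_⟩
  · ext g
    simp only [Set.mem_range, SetLike.mem_coe, AddMonoidHom.mem_range]
    constructor
    · rintro ⟨x, rfl⟩
      obtain ⟨f, rfl⟩ := QuotientAddGroup.mk_surjective x
      exact ⟨f, rfl⟩
    · rintro ⟨f, rfl⟩
      exact ⟨QuotientAddGroup.mk f, rfl⟩
  · refine ⟨AddEquiv.ofBijective (DNK.Theta J M) ⟨?_, ?_⟩⟩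
    · rw [injective_iff_map_eq_zero]
      rintro ⟨x, hxmem⟩ hx
      obtain ⟨f, rfl⟩ := QuotientAddGroup.mk_surjective x
      have hN : dualNorm J M f = 0 := by
        have := AddMonoidHom.mem_ker.1 hxmem
        rwa [DNK.q_mk] at this
      have h2 : ∀ c : groupCohomology.cocycles₁ (DNK.AA J M),
          (Fintype.card J : ℤ) ∣ ∑ σ : J, f (DNK.cv J M c σ) := by
        intro c
        have hz : DNK.P J M f c = 0 := by
          have := DFunLike.congr_fun hx (groupCohomology.H1π (DNK.AA J M) c)
          exact (DNK.ThetaFun_mk J M _ (AddMonoidHom.mem_ker.1 hxmem) c).symm.trans this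
        rw [DNK.P_apply, DNK.toCirc_eq_zero_iff] at hz
        obtain ⟨k, hk⟩ := hz
        refine ⟨k, ?_⟩
        have : (∑ σ : J, (f (DNK.cv J M c σ) : ℚ)) = (Fintype.card J : ℚ) * (k : ℚ) := by
          rw [eq_comm, ← hk]
          field_simp
        rw [← Int.cast_sum] at this
        exact_mod_cast this
      have haug : f ∈ dualAug J M := DNK.mem_aug_of_pairing J M f hN h2
      exact Subtype.ext ((QuotientAddGroup.eq_zero_iff f).2 haug)
    · intro φ
      obtain ⟨f, hf1, hf2⟩ := DNK.exists_preimage J M φ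
      have hker : (QuotientAddGroup.mk f : (M →+ ℤ) ⧸ dualAug J M) ∈ (DNK.q J M).ker := by
        rw [AddMonoidHom.mem_ker, DNK.q_mk, hf1]
      refine ⟨⟨QuotientAddGroup.mk f, hker⟩, ?_⟩
      apply DFunLike.ext
      intro y
      obtain ⟨c, rfl⟩ := DNK.H1π_surj J M y
      exact (DNK.ThetaFun_mk J M _ (AddMonoidHom.mem_ker.1 hker) c).trans (hf2 c)
end

section
/- Let J be a finite group and M a finitely generated J-module that is free as a ℤ-module. Then the image N(M^∨) of the norm map on the linear dual M^∨ is canonically isomorphic both to the quotient of the coinvariants (M^∨)_J by its torsion subgroup and to the linear dual (M^J)^∨ of the J-invariants of M. -/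
variable (J M : Type) [Group J] [Fintype J] [AddCommGroup M] [DistribMulAction J M]

/-- The subgroup `M^J` of `J`-invariants of `M`. -/
def invariants : AddSubgroup M where
  carrier := {m | ∀ σ : J, σ • m = m}
  add_mem' := by
    intro a b ha hb σ
    rw [smul_add, ha σ, hb σ]
  zero_mem' := fun σ => smul_zero σ
  neg_mem' := by
    intro a ha σ
    rw [smul_neg, ha σ]

lemma dualNorm_apply (f : M →+ ℤ) (m : M) :
    dualNorm J M f m = ∑ σ : J, f (σ⁻¹ • m) := by
  simp [dualNorm]

lemma sub_mem_dualAug (σ : J) (f : M →+ ℤ) :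
    f.comp (DistribMulAction.toAddMonoidHom M σ⁻¹) - f ∈ dualAug J M :=
  AddSubgroup.subset_closure ⟨σ, f, rfl⟩

lemma dualNorm_comp (σ : J) (f : M →+ ℤ) :
    dualNorm J M (f.comp (DistribMulAction.toAddMonoidHom M σ⁻¹)) = dualNorm J M f := by
  ext m
  rw [dualNorm_apply, dualNorm_apply]
  refine Fintype.sum_equiv (Equiv.mulRight σ) _ _ (fun τ => ?_)
  simp only [AddMonoidHom.coe_comp, Function.comp_apply, DistribMulAction.toAddMonoidHom_apply,
    Equiv.coe_mulRight]
  rw [mul_inv_rev, mul_smul]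

lemma dualAug_le_ker : dualAug J M ≤ (dualNorm J M).ker := by
  rw [dualAug, AddSubgroup.closure_le]
  rintro g ⟨σ, f, rfl⟩
  simp only [SetLike.mem_coe, AddMonoidHom.mem_ker, map_sub, dualNorm_comp, sub_self]

lemma dualNorm_sub_card_smul_mem (f : M →+ ℤ) :
    dualNorm J M f - Fintype.card J • f ∈ dualAug J M := by
  have h : dualNorm J M f - Fintype.card J • f
      = ∑ σ : J, (f.comp (DistribMulAction.toAddMonoidHom M σ⁻¹) - f) := by
    rw [Finset.sum_sub_distrib, Finset.sum_const, Finset.card_univ]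
    rfl
  rw [h]
  exact AddSubgroup.sum_mem _ fun σ _ => sub_mem_dualAug J M σ f

lemma dual_torsionfree {n : ℕ} (hn : n ≠ 0) {f : M →+ ℤ} (h : n • f = 0) : f = 0 := by
  ext m
  have h1 : (n : ℤ) * f m = 0 := by
    have := DFunLike.congr_fun h m
    simpa [nsmul_eq_mul] using this
  show f m = 0
  rcases mul_eq_zero.mp h1 with h2 | h2
  · exact absurd (by exact_mod_cast h2) hn
  · exact h2

/-- Restriction of a functional to the invariants. -/
def dualRes : (M →+ ℤ) →+ ((invariants J M) →+ ℤ) where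
  toFun f := f.comp (invariants J M).subtype
  map_zero' := rfl
  map_add' _ _ := rfl

lemma mem_invariants {m : M} : m ∈ invariants J M ↔ ∀ σ : J, σ • m = m := Iff.rfl

lemma sum_smul_mem_invariants (m : M) : (∑ σ : J, σ⁻¹ • m) ∈ invariants J M := by
  intro τ
  rw [Finset.smul_sum]
  refine Fintype.sum_equiv (Equiv.mulRight τ⁻¹) _ _ (fun σ => ?_)
  simp only [Equiv.coe_mulRight]
  rw [mul_inv_rev, inv_inv, mul_smul]

lemma ker_dualNorm_eq_ker_dualRes :
    (dualNorm J M).ker = (dualRes J M).ker := by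
  have hcard : (Fintype.card J : ℤ) ≠ 0 := by
    exact_mod_cast Fintype.card_ne_zero
  ext f
  simp only [AddMonoidHom.mem_ker]
  constructor
  · intro h
    ext ⟨m, hm⟩
    have h0 : dualNorm J M f m = 0 := by rw [h]; rfl
    rw [dualNorm_apply] at h0
    have h1 : ∑ σ : J, f (σ⁻¹ • m) = (Fintype.card J : ℤ) * f m := by
      rw [Finset.sum_congr rfl (fun σ _ => by rw [hm σ⁻¹]), Finset.sum_const,
        Finset.card_univ, nsmul_eq_mul]
    rw [h1, mul_eq_zero] at h0
    have : f m = 0 := h0.resolve_left hcard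
    simpa [dualRes] using this
  · intro h
    ext m
    rw [dualNorm_apply, ← map_sum f]
    have : f (∑ σ : J, σ⁻¹ • m)
        = dualRes J M f ⟨∑ σ : J, σ⁻¹ • m, sum_smul_mem_invariants J M m⟩ := rfl
    rw [AddMonoidHom.zero_apply, this, h]
    rfl

lemma mem_toIntSubmodule_invariants {m : M} :
    m ∈ AddSubgroup.toIntSubmodule (invariants J M) ↔ m ∈ invariants J M := Iff.rfl

lemma dualRes_surjective [Module.Finite ℤ M] [Module.Free ℤ M] :
    Function.Surjective (dualRes J M) := by
  classical
  intro h
  set S : Submodule ℤ M := AddSubgroup.toIntSubmodule (invariants J M) with hS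
  -- the invariants are saturated in M
  have hsat : ∀ (n : ℤ) (m : M), n ≠ 0 → n • m ∈ S → m ∈ S := by
    intro n m hn hmem σ
    have h1 : σ • (n • m) = n • m := hmem σ
    have h2 : σ • (n • m) = n • (σ • m) := by
      simpa using (DistribMulAction.toAddMonoidHom M σ).map_zsmul n m
    have h3 : n • (σ • m) = n • m := by rw [← h2, h1]
    exact smul_right_injective M hn h3
  haveI : NoZeroSMulDivisors ℤ (M ⧸ S) := by
    refine ⟨fun {a x} hax => ?_⟩
    obtain ⟨m, rfl⟩ := Submodule.Quotient.mk_surjective S x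
    rcases eq_or_ne a 0 with rfl | ha
    · exact Or.inl rfl
    · right
      rw [← Submodule.Quotient.mk_smul, Submodule.Quotient.mk_eq_zero] at hax
      rw [Submodule.Quotient.mk_eq_zero]
      exact hsat a m ha hax
  haveI : Module.Finite ℤ (M ⧸ S) := Module.Finite.quotient ℤ S
  haveI : Module.Free ℤ (M ⧸ S) := Module.free_of_finite_type_torsion_free'
  obtain ⟨g, hg⟩ := Module.projective_lifting_property S.mkQ LinearMap.id
    (Submodule.mkQ_surjective S)
  -- m - g (mkQ m) always lies in the invariants
  have hmem : ∀ m : M, m - g (S.mkQ m) ∈ invariants J M := by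
    intro m
    rw [← mem_toIntSubmodule_invariants, ← Submodule.Quotient.mk_eq_zero S,
      ← Submodule.mkQ_apply, map_sub]
    have : S.mkQ (g (S.mkQ m)) = S.mkQ m := by
      have := DFunLike.congr_fun hg (S.mkQ m)
      simpa using this
    rw [this, sub_self]
  refine ⟨{ toFun := fun m => h ⟨m - g (S.mkQ m), hmem m⟩
            map_zero' := ?_
            map_add' := ?_ }, ?_⟩
  · show h ⟨(0 : M) - g (S.mkQ 0), hmem 0⟩ = 0
    have h0 : (⟨(0 : M) - g (S.mkQ 0), hmem 0⟩ : invariants J M) = 0 := by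
      apply Subtype.ext
      simp
    rw [h0, map_zero]
  · intro a b
    show h ⟨(a + b) - g (S.mkQ (a + b)), hmem _⟩
        = h ⟨a - g (S.mkQ a), hmem a⟩ + h ⟨b - g (S.mkQ b), hmem b⟩
    rw [← map_add]
    congr 1
    apply Subtype.ext
    simp only [AddSubgroup.coe_add]
    rw [map_add S.mkQ, map_add g]
    abel
  · ext ⟨m, hm⟩
    have hmS : m ∈ S := hm
    have : S.mkQ m = 0 := (Submodule.Quotient.mk_eq_zero S).mpr hmS
    show h ⟨m - g (S.mkQ m), hmem m⟩ = h ⟨m, hm⟩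
    congr 1
    ext
    simp [this]

/-- If `J` is a finite group and `M` is a finitely generated `J`-module which is free as a
`ℤ`-module, then the image `N(M^∨)` of the norm map on the linear dual `M^∨` is isomorphic
both to the quotient of the coinvariants `(M^∨)_J` by its torsion subgroup, and to the linear
dual `(M^J)^∨` of the `J`-invariants of `M`. -/
theorem dualNorm_range_isos [Module.Finite ℤ M] [Module.Free ℤ M] :
    Nonempty ((dualNorm J M).range ≃+
      (((M →+ ℤ) ⧸ dualAug J M) ⧸ AddCommGroup.torsion ((M →+ ℤ) ⧸ dualAug J M))) ∧
    Nonempty ((dualNorm J M).range ≃+ ((invariants J M) →+ ℤ)) := by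
  constructor
  · -- first isomorphism
    have hle : dualAug J M ≤ (dualNorm J M).rangeRestrict.ker := by
      intro f hf
      have := dualAug_le_ker J M hf
      rw [AddMonoidHom.mem_ker] at this ⊢
      exact Subtype.ext this
    set φ : ((M →+ ℤ) ⧸ dualAug J M) →+ (dualNorm J M).range :=
      QuotientAddGroup.lift (dualAug J M) (dualNorm J M).rangeRestrict hle with hφ
    have hsurj : Function.Surjective φ := by
      intro y
      obtain ⟨f, hf⟩ := (dualNorm J M).rangeRestrict_surjective y
      exact ⟨QuotientAddGroup.mk f, hf⟩
    have hker : φ.ker = AddCommGroup.torsion ((M →+ ℤ) ⧸ dualAug J M) := by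
      ext x
      induction x using QuotientAddGroup.induction_on with
      | H f =>
        rw [AddMonoidHom.mem_ker]
        have hφf : φ (QuotientAddGroup.mk f) = (dualNorm J M).rangeRestrict f := rfl
        constructor
        · intro h0
          have hN : dualNorm J M f = 0 := by
            have h1 : (dualNorm J M).rangeRestrict f = 0 := hφf ▸ h0
            have := congrArg Subtype.val h1
            simpa using this
          rw [AddCommGroup.mem_torsion]
          rw [isOfFinAddOrder_iff_nsmul_eq_zero]
          refine ⟨Fintype.card J, Fintype.card_pos, ?_⟩
          have : (Fintype.card J) • f ∈ dualAug J M := by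
            have h1 := dualNorm_sub_card_smul_mem J M f
            rw [hN, zero_sub] at h1
            simpa using (dualAug J M).neg_mem h1
          rw [show (QuotientAddGroup.mk f : (M →+ ℤ) ⧸ dualAug J M)
              = QuotientAddGroup.mk' (dualAug J M) f from rfl, ← map_nsmul]
          exact (QuotientAddGroup.eq_zero_iff _).mpr this
        · intro htor
          rw [AddCommGroup.mem_torsion, isOfFinAddOrder_iff_nsmul_eq_zero] at htor
          obtain ⟨n, hn, hnf⟩ := htor
          have : n • f ∈ dualAug J M := by
            rw [← QuotientAddGroup.eq_zero_iff (n • f)]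
            rw [show (QuotientAddGroup.mk f : (M →+ ℤ) ⧸ dualAug J M)
                = QuotientAddGroup.mk' (dualAug J M) f from rfl, ← map_nsmul] at hnf
            exact hnf
          have hN0 : dualNorm J M (n • f) = 0 := dualAug_le_ker J M this
          rw [map_nsmul] at hN0
          have : dualNorm J M f = 0 := dual_torsionfree M hn.ne' hN0
          rw [hφf]
          exact Subtype.ext this
    refine ⟨((QuotientAddGroup.quotientKerEquivOfSurjective φ hsurj).symm.trans
      (QuotientAddGroup.quotientAddEquivOfEq hker)).symm.symm⟩
  · -- second isomorphism
    refine ⟨((QuotientAddGroup.quotientKerEquivRange (dualNorm J M)).symm.trans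
      ((QuotientAddGroup.quotientAddEquivOfEq (ker_dualNorm_eq_ker_dualRes J M)).trans
        (QuotientAddGroup.quotientKerEquivOfSurjective (dualRes J M)
          (dualRes_surjective J M)))).symm.symm⟩
end

section
/- Let J be a finite group and M a finitely generated J-module that is free as a ℤ-module. Then M^J = 0 if and only if M admits no nonzero quotient J-module which is free as a ℤ-module and on which J acts trivially (equivalently: for every J-submodule Y of M such that M/Y is ℤ-free and J acts trivially on M/Y, one has Y = M). -/
variable (J M : Type) [Group J] [AddCommGroup M] [DistribMulAction J M]

lemma smul_zsmul_comm (σ : J) (n : ℤ) (x : M) : σ • (n • x) = n • (σ • x) :=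
  (DistribMulAction.toAddMonoidHom M σ).map_zsmul n x

/-- Let `J` be a finite group and `M` a finitely generated `J`-module which is free as a
`ℤ`-module. Then `M^J = 0` if and only if `M` admits no nonzero quotient `J`-module which is
free as a `ℤ`-module and on which `J` acts trivially; equivalently, for every `J`-submodule
`Y` of `M` such that `M/Y` is `ℤ`-free and `J` acts trivially on `M/Y`, one has `Y = M`. -/
theorem invariants_eq_bot_iff_no_free_trivial_quotient [Finite J]
    [Module.Finite ℤ M] [Module.Free ℤ M] :
    invariants J M = ⊥ ↔
      ∀ Y : AddSubgroup M, (∀ σ : J, ∀ m ∈ Y, σ • m ∈ Y) →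
        Module.Free ℤ (M ⧸ Y) → (∀ (σ : J) (m : M), σ • m - m ∈ Y) → Y = ⊤ := by
  have := Fintype.ofFinite J
  constructor
  · intro hinv Y hY hfree htriv
    rw [AddSubgroup.eq_top_iff']
    intro m
    -- The norm element is invariant, hence zero.
    have hN : (∑ σ : J, σ • m) ∈ invariants J M := by
      intro τ
      rw [Finset.smul_sum]
      exact Fintype.sum_equiv (Equiv.mulLeft τ) _ _
        (fun σ => by simp [mul_smul])
    rw [hinv, AddSubgroup.mem_bot] at hN
    -- ∑ (σ•m - m) ∈ Y
    have hsum : (∑ σ : J, (σ • m - m)) ∈ Y :=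
      AddSubgroup.sum_mem Y (fun σ _ => htriv σ m)
    have hcard : ((Fintype.card J : ℤ) • m) ∈ Y := by
      have : (∑ σ : J, (σ • m - m)) = -((Fintype.card J : ℤ) • m) := by
        rw [Finset.sum_sub_distrib, hN]
        simp [Finset.sum_const, natCast_zsmul]
      rw [this] at hsum
      simpa using Y.neg_mem hsum
    -- in the torsion-free quotient this forces m ∈ Y
    have : ((Fintype.card J : ℤ)) • (QuotientAddGroup.mk m : M ⧸ Y) = 0 := by
      rw [← QuotientAddGroup.mk_zsmul]
      exact (QuotientAddGroup.eq_zero_iff _).mpr hcard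
    have hc : (Fintype.card J : ℤ) ≠ 0 := by
      exact_mod_cast Fintype.card_ne_zero
    have := (smul_eq_zero.mp this).resolve_left hc
    exact (QuotientAddGroup.eq_zero_iff _).mp this
  · intro h
    rw [AddSubgroup.eq_bot_iff_forall]
    intro m hm
    -- A = augmentation submodule
    set A : AddSubgroup M :=
      AddSubgroup.closure {x | ∃ (σ : J) (y : M), x = σ • y - y} with hA
    have hAgen : ∀ (σ : J) (y : M), σ • y - y ∈ A :=
      fun σ y => AddSubgroup.subset_closure ⟨σ, y, rfl⟩
    have hAstable : ∀ (σ : J), ∀ a ∈ A, σ • a ∈ A := by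
      intro σ a ha
      induction ha using AddSubgroup.closure_induction with
      | mem x hx =>
        obtain ⟨τ, y, rfl⟩ := hx
        have : σ • (τ • y - y) = ((σ * τ) • y - y) - (σ • y - y) := by
          rw [smul_sub, mul_smul]; abel
        rw [this]
        exact A.sub_mem (hAgen _ _) (hAgen _ _)
      | zero => simpa using A.zero_mem
      | add x y _ _ hx hy => rw [smul_add]; exact A.add_mem hx hy
      | neg x _ hx => rw [smul_neg]; exact A.neg_mem hx
    -- Y = saturation of A
    let Y : AddSubgroup M :=
      { carrier := {x | ∃ n : ℤ, n ≠ 0 ∧ n • x ∈ A}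
        zero_mem' := ⟨1, one_ne_zero, by simpa using A.zero_mem⟩
        add_mem' := by
          rintro x y ⟨n, hn, hnx⟩ ⟨k, hk, hky⟩
          refine ⟨n * k, mul_ne_zero hn hk, ?_⟩
          have : (n * k) • (x + y) = k • (n • x) + n • (k • y) := by
            rw [smul_add, smul_smul, smul_smul, mul_comm k n]
          rw [this]
          exact A.add_mem (A.zsmul_mem hnx k) (A.zsmul_mem hky n)
        neg_mem' := by
          rintro x ⟨n, hn, hnx⟩
          exact ⟨n, hn, by simpa using A.neg_mem hnx⟩ }
    have hYstable : ∀ σ : J, ∀ x ∈ Y, σ • x ∈ Y := by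
      rintro σ x ⟨n, hn, hnx⟩
      exact ⟨n, hn, by rw [← smul_zsmul_comm]; exact hAstable σ _ hnx⟩
    have htriv : ∀ (σ : J) (x : M), σ • x - x ∈ Y :=
      fun σ x => ⟨1, one_ne_zero, by simpa using hAgen σ x⟩
    have hnzd : NoZeroSMulDivisors ℤ (M ⧸ Y) := by
      constructor
      intro c x hcx
      rcases eq_or_ne c 0 with hc | hc
      · exact Or.inl hc
      · refine Or.inr ?_
        induction x using QuotientAddGroup.induction_on with
        | H x =>
          rw [← QuotientAddGroup.mk_zsmul] at hcx
          obtain ⟨k, hk, hkx⟩ := (QuotientAddGroup.eq_zero_iff _).mp hcx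
          rw [QuotientAddGroup.eq_zero_iff]
          exact ⟨k * c, mul_ne_zero hk hc, by rwa [← smul_smul]⟩
    have hfin : Module.Finite ℤ (M ⧸ Y) :=
      Module.Finite.of_surjective ((QuotientAddGroup.mk' Y).toIntLinearMap)
        (QuotientAddGroup.mk'_surjective Y)
    have hfree : Module.Free ℤ (M ⧸ Y) := Module.free_of_finite_type_torsion_free'
    have hYtop : Y = ⊤ := h Y hYstable hfree htriv
    have hmY : m ∈ Y := hYtop ▸ AddSubgroup.mem_top m
    obtain ⟨n, hn, hnm⟩ := hmY
    -- apply the norm map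
    let φ : M →+ M :=
      { toFun := fun x => ∑ σ : J, σ • x
        map_zero' := by simp
        map_add' := by intro x y; simp [smul_add, Finset.sum_add_distrib] }
    have hφA : ∀ a ∈ A, φ a = 0 := by
      intro a ha
      induction ha using AddSubgroup.closure_induction with
      | mem x hx =>
        obtain ⟨τ, y, rfl⟩ := hx
        have h1 : (∑ σ : J, σ • (τ • y)) = ∑ σ : J, σ • y :=
          Fintype.sum_equiv (Equiv.mulRight τ) _ _ (fun σ => by simp [mul_smul])
        simp only [φ, AddMonoidHom.coe_mk, ZeroHom.coe_mk]
        rw [show (∑ σ : J, σ • (τ • y - y)) = (∑ σ : J, σ • (τ • y)) - ∑ σ : J, σ • y by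
          simp [smul_sub, Finset.sum_sub_distrib], h1, sub_self]
      | zero => simp
      | add x y _ _ hx hy => rw [map_add, hx, hy, add_zero]
      | neg x _ hx => rw [map_neg, hx, neg_zero]
    have hφm : φ m = (Fintype.card J : ℤ) • m := by
      simp only [φ, AddMonoidHom.coe_mk, ZeroHom.coe_mk]
      rw [Finset.sum_congr rfl (fun σ _ => hm σ)]
      simp [Finset.sum_const, natCast_zsmul]
    have : n • ((Fintype.card J : ℤ) • m) = 0 := by
      rw [← hφm, ← map_zsmul]
      exact hφA _ hnm
    have hc : (Fintype.card J : ℤ) ≠ 0 := by exact_mod_cast Fintype.card_ne_zero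
    have := (smul_eq_zero.mp this).resolve_left hn
    exact (smul_eq_zero.mp this).resolve_left hc
end

section
/- Let J be a finite group and let 0 → A → B → C → 0 be a short exact sequence of finitely generated J-modules, where A is free as a ℤ-module and J acts trivially on A (so A_J = A). Then the induced sequence of coinvariants 0 → A → B_J → C_J → 0 is exact; in particular the induced map A → B_J is injective. -/
variable (J A B C : Type) [Group J]
  [AddCommGroup A] [DistribMulAction J A]
  [AddCommGroup B] [DistribMulAction J B]
  [AddCommGroup C] [DistribMulAction J C]

/-- The augmentation submodule `𝔄_J M` of a `J`-module `M`, generated by the elements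
`σ • m - m`; the coinvariants `M_J` are the quotient `M ⧸ 𝔄_J M`. -/
def augSub (M : Type) [AddCommGroup M] [DistribMulAction J M] : AddSubgroup M :=
  AddSubgroup.closure {x | ∃ (σ : J) (m : M), σ • m - m = x}

/-- Let `J` be a finite group and `0 → A → B → C → 0` a short exact sequence of finitely
generated `J`-modules, where `A` is free as a `ℤ`-module and `J` acts trivially on `A`
(so `A_J = A`). Then the induced sequence of coinvariants `0 → A → B_J → C_J → 0` is exact;
in particular the induced map `A → B_J` is injective. -/
theorem coinvariants_short_exact [Finite J]
    [Module.Finite ℤ A] [Module.Finite ℤ B] [Module.Finite ℤ C] [Module.Free ℤ A]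
    (htriv : ∀ (σ : J) (a : A), σ • a = a)
    (f : A →+ B) (g : B →+ C)
    (hf : ∀ (σ : J) (a : A), f (σ • a) = σ • f a)
    (hg : ∀ (σ : J) (b : B), g (σ • b) = σ • g b)
    (hinj : Function.Injective f) (hsurj : Function.Surjective g)
    (hexact : f.range = g.ker) :
    ∃ (f' : A →+ B ⧸ augSub J B) (g' : (B ⧸ augSub J B) →+ (C ⧸ augSub J C)),
      (∀ a : A, f' a = QuotientAddGroup.mk (f a)) ∧
      (∀ b : B, g' (QuotientAddGroup.mk b) = QuotientAddGroup.mk (g b)) ∧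
      Function.Injective f' ∧ Function.Surjective g' ∧ f'.range = g'.ker := by
  classical
  cases nonempty_fintype J
  have hle : augSub J B ≤ (augSub J C).comap g := by
    rw [augSub, AddSubgroup.closure_le]
    rintro x ⟨σ, m, rfl⟩
    show g (σ • m - m) ∈ augSub J C
    rw [map_sub, hg]
    exact AddSubgroup.subset_closure ⟨σ, g m, rfl⟩
  refine ⟨(QuotientAddGroup.mk' _).comp f, QuotientAddGroup.map _ _ g hle,
    fun a => rfl, fun b => rfl, ?_, ?_, ?_⟩
  · -- injectivity via norm map
    rw [injective_iff_map_eq_zero]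
    intro a ha
    have hmem : f a ∈ augSub J B := by
      rwa [AddMonoidHom.comp_apply, QuotientAddGroup.mk'_apply,
        QuotientAddGroup.eq_zero_iff] at ha
    set N : B →+ B :=
      { toFun := fun b => ∑ σ : J, σ • b
        map_zero' := by simp
        map_add' := by intro x y; simp [smul_add, Finset.sum_add_distrib] } with hN
    have hker : augSub J B ≤ N.ker := by
      rw [augSub, AddSubgroup.closure_le]
      rintro x ⟨σ, m, rfl⟩
      have : ∑ τ : J, τ • σ • m = ∑ τ : J, τ • m :=
        Fintype.sum_equiv (Equiv.mulRight σ) _ _ (fun τ => by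
          simp [Equiv.coe_mulRight, mul_smul])
      simp [hN, AddMonoidHom.mem_ker, smul_sub, Finset.sum_sub_distrib, this]
    have hNfa : N (f a) = 0 := hker hmem
    have h1 : N (f a) = f ((Fintype.card J : ℤ) • a) := by
      simp only [hN, AddMonoidHom.coe_mk, ZeroHom.coe_mk]
      rw [map_zsmul]
      calc ∑ σ : J, σ • f a = ∑ σ : J, f a := by
            refine Finset.sum_congr rfl fun σ _ => ?_
            rw [← hf, htriv]
          _ = (Fintype.card J : ℤ) • f a := by
            simp [Finset.sum_const, natCast_zsmul]
    have h2 : (Fintype.card J : ℤ) • a = 0 := by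
      apply hinj; rw [← h1, hNfa, map_zero]
    rcases smul_eq_zero.mp h2 with h | h
    · exact absurd h (by exact_mod_cast Fintype.card_ne_zero)
    · exact h
  · -- surjectivity
    intro x
    obtain ⟨c, rfl⟩ := QuotientAddGroup.mk'_surjective _ x
    obtain ⟨b, rfl⟩ := hsurj c
    exact ⟨QuotientAddGroup.mk b, rfl⟩
  · -- exactness
    ext x
    constructor
    · rintro ⟨a, rfl⟩
      have : g (f a) = 0 := by
        have : f a ∈ g.ker := hexact ▸ ⟨a, rfl⟩
        exact this
      simp [AddMonoidHom.mem_ker, this]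
    · intro hx
      obtain ⟨b, rfl⟩ := QuotientAddGroup.mk'_surjective _ x
      have hgb : g b ∈ augSub J C := by
        rwa [AddMonoidHom.mem_ker, QuotientAddGroup.mk'_apply, QuotientAddGroup.map_mk,
          QuotientAddGroup.eq_zero_iff] at hx
      have hsub : augSub J C ≤ (augSub J B).map g := by
        rw [augSub, AddSubgroup.closure_le]
        rintro y ⟨σ, c, rfl⟩
        obtain ⟨b', rfl⟩ := hsurj c
        exact ⟨σ • b' - b', AddSubgroup.subset_closure ⟨σ, b', rfl⟩, by simp [map_sub, hg]⟩
      obtain ⟨b₀, hb₀, hgb₀⟩ := hsub hgb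
      have : b - b₀ ∈ g.ker := by simp [AddMonoidHom.mem_ker, map_sub, hgb₀]
      obtain ⟨a, ha⟩ := hexact ▸ this
      refine ⟨a, ?_⟩
      simp only [AddMonoidHom.comp_apply, QuotientAddGroup.mk'_apply, ha]
      rw [QuotientAddGroup.eq]
      have : -(b - b₀) + b = b₀ := by abel
      rw [this]; exact hb₀
end

section
/- Let J be a finite group and M a finitely generated J-module that is free as a ℤ-module. Then there is a canonical isomorphism of finite abelian groups (M^J/NM)^D ≅ (M^∨)^J / N(M^∨); that is, the Pontryagin dual of the zeroth Tate cohomology group Ĥ⁰(J,M) = M^J/NM is isomorphic to the zeroth Tate cohomology group Ĥ⁰(J,M^∨) = (M^∨)^J/N(M^∨) of the linear dual. -/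
variable (J M : Type) [Group J] [Fintype J] [AddCommGroup M] [DistribMulAction J M]

/-- The norm map `N : M → M`, `m ↦ ∑_{σ ∈ J} σ • m`. -/
def normMapJ : M →+ M := ∑ σ : J, DistribMulAction.toAddMonoidHom M σ

/-- The subgroup `(M^∨)^J` of `J`-invariants of the linear dual `M^∨ = Hom_ℤ(M, ℤ)`, for the
action `(σ · f)(m) = f(σ⁻¹ • m)`: those `f` with `f (σ • m) = f m` for all `σ, m`. -/
def dualInvariants : AddSubgroup (M →+ ℤ) where
  carrier := {f | ∀ (σ : J) (m : M), f (σ • m) = f m}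
  add_mem' := by
    intro a b ha hb σ m
    simp [ha σ m, hb σ m]
  zero_mem' := by intro σ m; rfl
  neg_mem' := by
    intro a ha σ m
    simp [ha σ m]

section TateAux

variable (J M : Type) [Group J] [Fintype J] [AddCommGroup M] [DistribMulAction J M]

lemma normMapJ_apply (x : M) : normMapJ J M x = ∑ σ : J, σ • x := by
  simp [normMapJ, AddMonoidHom.finset_sum_apply, DistribMulAction.toAddMonoidHom]

variable {J M}

lemma normMapJ_mem_invariants (x : M) : normMapJ J M x ∈ invariants J M := by
  intro σ
  rw [normMapJ_apply, Finset.smul_sum]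
  exact Fintype.sum_equiv (Equiv.mulLeft σ) _ _ (fun τ => by simp [smul_smul])

lemma normMapJ_smul (σ : J) (x : M) : normMapJ J M (σ • x) = normMapJ J M x := by
  rw [normMapJ_apply, normMapJ_apply]
  exact Fintype.sum_equiv (Equiv.mulRight σ) _ _ (fun τ => by simp [smul_smul])

lemma normMapJ_of_invariant {m : M} (hm : m ∈ invariants J M) :
    normMapJ J M m = Fintype.card J • m := by
  rw [normMapJ_apply]
  rw [Finset.sum_congr rfl (fun σ _ => hm σ)]
  simp [Finset.sum_const, Finset.card_univ]

lemma dualNorm_apply' (g : M →+ ℤ) (x : M) : dualNorm J M g x = g (normMapJ J M x) := by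
  show (∑ σ : J, g.comp (DistribMulAction.toAddMonoidHom M σ⁻¹)) x = _
  rw [AddMonoidHom.finset_sum_apply, normMapJ_apply, map_sum]
  exact Fintype.sum_equiv (Equiv.inv J) _ _ (fun τ => rfl)

lemma dualInvariant_normMapJ {f : M →+ ℤ} (hf : f ∈ dualInvariants J M) (x : M) :
    f (normMapJ J M x) = Fintype.card J • f x := by
  rw [normMapJ_apply, map_sum]
  rw [Finset.sum_congr rfl (fun σ _ => hf σ x)]
  simp [Finset.sum_const, Finset.card_univ]

lemma cardJ_ne_zero : (Fintype.card J : ℤ) ≠ 0 := by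
  exact_mod_cast Fintype.card_pos.ne'

section FinFree

variable [Module.Finite ℤ M] [Module.Free ℤ M]

lemma noZeroSMul_M : NoZeroSMulDivisors ℤ M :=
  ⟨fun {_ _} h => (Module.Free.chooseBasis ℤ M).smul_eq_zero.mp h⟩

/-- `M^J` is a pure submodule of `M`, hence admits a retraction. -/
lemma exists_retraction :
    ∃ π : M →ₗ[ℤ] M, (∀ x, π x ∈ invariants J M) ∧ ∀ m ∈ invariants J M, π m = m := by
  haveI := noZeroSMul_M (M := M)
  set P : Submodule ℤ M := AddSubgroup.toIntSubmodule (invariants J M) with hP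
  have hmem : ∀ x : M, x ∈ P ↔ x ∈ invariants J M := fun x => Iff.rfl
  haveI : Module.Finite ℤ (M ⧸ P) := Module.Finite.of_surjective P.mkQ (Submodule.mkQ_surjective P)
  haveI : NoZeroSMulDivisors ℤ (M ⧸ P) := by
    refine ⟨fun {c x} hcx => ?_⟩
    by_cases hc : c = 0
    · exact Or.inl hc
    · refine Or.inr ?_
      obtain ⟨y, rfl⟩ := Submodule.mkQ_surjective P x
      rw [show P.mkQ y = Submodule.Quotient.mk y from rfl, ← Submodule.Quotient.mk_smul,
        Submodule.Quotient.mk_eq_zero] at hcx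
      rw [show P.mkQ y = Submodule.Quotient.mk y from rfl, Submodule.Quotient.mk_eq_zero]
      rw [hmem] at hcx
      rw [hmem]
      intro σ
      have h1 : c • (σ • y - y) = 0 := by
        have h2 : σ • (c • y) = c • (σ • y) :=
          AddMonoidHom.map_zsmul (DistribMulAction.toAddMonoidHom M σ) c y
        rw [smul_sub, ← h2, hcx σ, sub_self]
      rcases smul_eq_zero.mp h1 with h | h
      · exact absurd h hc
      · exact sub_eq_zero.mp h
  haveI : Module.Free ℤ (M ⧸ P) := Module.free_of_finite_type_torsion_free'
  obtain ⟨s, hs⟩ := Module.projective_lifting_property P.mkQ LinearMap.id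
    (Submodule.mkQ_surjective P)
  set π : M →ₗ[ℤ] M := (LinearMap.id : M →ₗ[ℤ] M) - s ∘ₗ P.mkQ with hπ
  refine ⟨π, fun x => ?_, fun m hm => ?_⟩
  · rw [← hmem, ← Submodule.Quotient.mk_eq_zero P]
    show P.mkQ (π x) = 0
    rw [hπ]
    simp only [map_sub, LinearMap.sub_apply, LinearMap.id_apply, LinearMap.comp_apply]
    have h5 := congrArg (fun f => f (P.mkQ x)) hs
    simp only [LinearMap.comp_apply, LinearMap.id_apply] at h5
    rw [h5, sub_self]
  · have hm0 : P.mkQ m = 0 := by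
      rw [show P.mkQ m = Submodule.Quotient.mk m from rfl, Submodule.Quotient.mk_eq_zero]
      exact (hmem m).mpr hm
    rw [hπ]
    simp [LinearMap.sub_apply, LinearMap.comp_apply, hm0]

/-- Key lemma 1: an invariant functional whose values on `M^J` are divisible by `|J|`
is a norm. -/
lemma mem_dualNorm_range {f : M →+ ℤ} (hf : f ∈ dualInvariants J M)
    (h : ∀ m ∈ invariants J M, (Fintype.card J : ℤ) ∣ f m) :
    f ∈ (dualNorm J M).range := by
  obtain ⟨π, hπ1, hπ2⟩ := exists_retraction (J := J) (M := M)
  have hn : (Fintype.card J : ℤ) ≠ 0 := cardJ_ne_zero (J := J)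
  have hdvd : ∀ x : M, (Fintype.card J : ℤ) ∣ f (π x) := fun x => h _ (hπ1 x)
  refine ⟨AddMonoidHom.mk' (fun x => f (π x) / (Fintype.card J : ℤ)) ?_, ?_⟩
  · intro a b
    apply mul_left_cancel₀ hn
    rw [Int.mul_ediv_cancel' (hdvd _), map_add, map_add, mul_add,
      Int.mul_ediv_cancel' (hdvd _), Int.mul_ediv_cancel' (hdvd _)]
  · ext x
    rw [dualNorm_apply']
    show f (π (normMapJ J M x)) / (Fintype.card J : ℤ) = f x
    rw [hπ2 _ (normMapJ_mem_invariants x), dualInvariant_normMapJ hf, nsmul_eq_mul]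
    exact Int.mul_ediv_cancel_left _ hn

/-- Key lemma 2: an invariant element on which all invariant functionals take values
divisible by `|J|` is a norm. -/
lemma mem_normMapJ_range {m : M} (hm : m ∈ invariants J M)
    (h : ∀ f ∈ dualInvariants J M, (Fintype.card J : ℤ) ∣ f m) :
    m ∈ (normMapJ J M).range := by
  haveI := noZeroSMul_M (M := M)
  have hn : (Fintype.card J : ℤ) ≠ 0 := cardJ_ne_zero (J := J)
  set Nl : M →ₗ[ℤ] M := (normMapJ J M).toIntLinearMap with hNl
  set K : Submodule ℤ M := LinearMap.ker Nl with hK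
  haveI : Module.Finite ℤ (M ⧸ K) := Module.Finite.of_surjective K.mkQ (Submodule.mkQ_surjective K)
  haveI : NoZeroSMulDivisors ℤ (M ⧸ K) := by
    refine ⟨fun {c x} hcx => ?_⟩
    by_cases hc : c = 0
    · exact Or.inl hc
    · refine Or.inr ?_
      obtain ⟨y, rfl⟩ := Submodule.mkQ_surjective K x
      rw [show K.mkQ y = Submodule.Quotient.mk y from rfl, ← Submodule.Quotient.mk_smul,
        Submodule.Quotient.mk_eq_zero] at hcx
      rw [show K.mkQ y = Submodule.Quotient.mk y from rfl, Submodule.Quotient.mk_eq_zero]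
      have : c • Nl y = 0 := by rw [← map_smul]; exact hcx
      rcases smul_eq_zero.mp this with hx | hx
      · exact absurd hx hc
      · exact hx
  haveI : Module.Free ℤ (M ⧸ K) := Module.free_of_finite_type_torsion_free'
  set b := Module.Free.chooseBasis ℤ (M ⧸ K) with hb
  have hcoord : ∀ i, (Fintype.card J : ℤ) ∣ b.repr (Submodule.Quotient.mk m) i := by
    intro i
    have hfinv : ((b.coord i).comp K.mkQ).toAddMonoidHom ∈ dualInvariants J M := by
      intro σ x
      show b.coord i (K.mkQ (σ • x)) = b.coord i (K.mkQ x)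
      congr 1
      rw [← sub_eq_zero, ← map_sub, show K.mkQ (σ • x - x) = Submodule.Quotient.mk (σ • x - x)
        from rfl, Submodule.Quotient.mk_eq_zero]
      show σ • x - x ∈ LinearMap.ker Nl
      rw [LinearMap.mem_ker]
      show normMapJ J M (σ • x - x) = 0
      rw [map_sub, normMapJ_smul, sub_self]
    have := h _ hfinv
    simpa using this
  set y : M ⧸ K := ∑ i, (b.repr (Submodule.Quotient.mk m) i / (Fintype.card J : ℤ)) • b i with hy
  have hmy : (Fintype.card J : ℤ) • y = Submodule.Quotient.mk m := by
    rw [hy, Finset.smul_sum]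
    conv_rhs => rw [← Module.Basis.sum_repr b (Submodule.Quotient.mk m)]
    refine Finset.sum_congr rfl (fun i _ => ?_)
    rw [smul_smul, Int.mul_ediv_cancel' (hcoord i)]
  obtain ⟨y', hy'⟩ := Submodule.mkQ_surjective K y
  have hker : m - (Fintype.card J : ℤ) • y' ∈ K := by
    rw [← Submodule.Quotient.mk_eq_zero K, Submodule.Quotient.mk_sub]
    rw [show Submodule.Quotient.mk ((Fintype.card J : ℤ) • y') =
      (Fintype.card J : ℤ) • Submodule.Quotient.mk y' from (Submodule.Quotient.mk_smul K _ _),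
      show (Submodule.Quotient.mk y' : M ⧸ K) = K.mkQ y' from rfl, hy', hmy, sub_self]
  have hNm : Nl m = Nl ((Fintype.card J : ℤ) • y') := by
    have := (LinearMap.mem_ker).mp hker
    rw [map_sub] at this
    exact sub_eq_zero.mp this
  have h2 : Nl m = (Fintype.card J : ℤ) • m := by
    show normMapJ J M m = _
    rw [normMapJ_of_invariant hm, natCast_zsmul]
  have h3 : Nl y' = normMapJ J M y' := rfl
  have hNm' : (Fintype.card J : ℤ) • m = (Fintype.card J : ℤ) • normMapJ J M y' := by
    rw [← h2, hNm, map_smul, h3]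
  have := smul_right_injective M hn
  exact ⟨y', (this hNm').symm⟩

end FinFree

end TateAux

section CharCount

/-- The natural injection `ℚ/ℤ → ℝ/ℤ`. -/
noncomputable def ratToReal : AddCircle (1 : ℚ) →+ AddCircle (1 : ℝ) :=
  QuotientAddGroup.map _ _ (Rat.castHom ℝ).toAddMonoidHom (by
    intro x hx
    obtain ⟨z, hz⟩ := AddSubgroup.mem_zmultiples_iff.mp hx
    refine AddSubgroup.mem_comap.mpr (AddSubgroup.mem_zmultiples_iff.mpr ⟨z, ?_⟩)
    rw [zsmul_eq_mul] at hz ⊢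
    show (z : ℝ) * 1 = ((x : ℚ) : ℝ)
    rw [← hz]; push_cast; ring)

lemma ratToReal_coe (q : ℚ) :
    ratToReal ((q : ℚ) : AddCircle (1 : ℚ)) = ((q : ℝ) : AddCircle (1 : ℝ)) := rfl

lemma ratToReal_injective : Function.Injective ratToReal := by
  rw [injective_iff_map_eq_zero]
  intro a ha
  refine QuotientAddGroup.induction_on a (fun q => ?_) ha
  intro hq
  rw [ratToReal_coe, AddCircle.coe_eq_zero_iff] at hq
  obtain ⟨z, hz⟩ := hq
  rw [AddCircle.coe_eq_zero_iff]
  refine ⟨z, ?_⟩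
  rw [zsmul_eq_mul] at hz ⊢
  have : ((z : ℚ) : ℝ) * (1:ℝ) = ((q : ℚ) : ℝ) := by push_cast; push_cast at hz; exact hz
  have h2 : ((z * 1 : ℚ) : ℝ) = ((q : ℚ) : ℝ) := by push_cast; push_cast at this; linarith
  exact_mod_cast h2

/-- Embed `Hom(X, ℚ/ℤ)` into the complex characters of `X`. -/
noncomputable def toCharC (X : Type) [AddCommGroup X] (φ : X →+ AddCircle (1 : ℚ)) :
    AddChar X ℂ :=
  (Circle.coeHom.compAddChar (AddCircle.toCircle_addChar (T := 1))).compAddMonoidHom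
    (ratToReal.comp φ)

lemma toCharC_injective (X : Type) [AddCommGroup X] : Function.Injective (toCharC X) := by
  intro φ ψ h
  ext x
  apply ratToReal_injective
  apply AddCircle.injective_toCircle (one_ne_zero)
  apply Subtype.coe_injective
  exact DFunLike.congr_fun h x

lemma char_finite_and_card_le (X : Type) [AddCommGroup X] [Finite X] :
    Finite (X →+ AddCircle (1 : ℚ)) ∧
      Nat.card (X →+ AddCircle (1 : ℚ)) ≤ Nat.card X := by
  cases nonempty_fintype X
  have h1 : Nat.card (AddChar X ℂ) = Nat.card X := by
    rw [Nat.card_eq_fintype_card, Nat.card_eq_fintype_card, AddChar.card_eq]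
  refine ⟨Finite.of_injective _ (toCharC_injective X), ?_⟩
  calc Nat.card (X →+ AddCircle (1 : ℚ)) ≤ Nat.card (AddChar X ℂ) :=
        Nat.card_le_card_of_injective _ (toCharC_injective X)
    _ = Nat.card X := h1

lemma card_char_eq (X : Type) [AddCommGroup X] [Finite X] :
    Finite (X →+ AddCircle (1 : ℚ)) ∧
      Nat.card (X →+ AddCircle (1 : ℚ)) = Nat.card X := by
  obtain ⟨hfin, hle⟩ := char_finite_and_card_le X
  haveI := hfin
  obtain ⟨hfin2, hle2⟩ := char_finite_and_card_le (X →+ AddCircle (1 : ℚ))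
  haveI := hfin2
  have hev : Function.Injective
      (fun x : X => (AddMonoidHom.mk' (fun φ : X →+ AddCircle (1 : ℚ) => φ x)
        (fun φ ψ => rfl) : (X →+ AddCircle (1 : ℚ)) →+ AddCircle (1 : ℚ))) := by
    intro x y hxy
    have hval : ∀ φ : X →+ AddCircle (1 : ℚ), φ x = φ y := fun φ => DFunLike.congr_fun hxy φ
    have hsub : ∀ φ : X →+ AddCircle (1 : ℚ), φ (x - y) = 0 := by
      intro φ; rw [map_sub, hval φ, sub_self]
    have : x - y = 0 := CharacterModule.eq_zero_of_character_apply (fun c => hsub c)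
    exact sub_eq_zero.mp this
  have h2 : Nat.card X ≤ Nat.card (X →+ AddCircle (1 : ℚ)) :=
    le_trans (Nat.card_le_card_of_injective _ hev) hle2
  exact ⟨hfin, le_antisymm hle h2⟩

end CharCount

section Pairing

variable (J M : Type) [Group J] [Fintype J] [AddCommGroup M] [DistribMulAction J M]

/-- The map `k ↦ k/|J| mod ℤ`. -/
noncomputable def toQn : ℤ →+ AddCircle (1 : ℚ) :=
  (QuotientAddGroup.mk' (AddSubgroup.zmultiples (1 : ℚ))).comp
    (AddMonoidHom.mk' (fun k => (k : ℚ) / (Fintype.card J : ℚ)) (fun a b => by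
      push_cast; ring))

lemma toQn_eq_zero_iff (k : ℤ) : toQn J k = 0 ↔ (Fintype.card J : ℤ) ∣ k := by
  have hne : (Fintype.card J : ℚ) ≠ 0 := by
    exact_mod_cast (Nat.cast_pos.mpr Fintype.card_pos).ne' (α := ℚ)
  show (((k : ℚ) / (Fintype.card J : ℚ) : ℚ) : AddCircle (1 : ℚ)) = 0 ↔ _
  rw [AddCircle.coe_eq_zero_iff]
  constructor
  · rintro ⟨z, hz⟩
    rw [zsmul_eq_mul, mul_one] at hz
    refine ⟨z, ?_⟩
    have : (k : ℚ) = (Fintype.card J : ℚ) * (z : ℚ) := by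
      field_simp at hz
      linarith [hz]
    exact_mod_cast this
  · rintro ⟨c, rfl⟩
    refine ⟨c, ?_⟩
    rw [zsmul_eq_mul, mul_one]
    push_cast
    field_simp

lemma toQn_card_mul (k : ℤ) : toQn J ((Fintype.card J : ℤ) * k) = 0 :=
  (toQn_eq_zero_iff J _).mpr ⟨k, rfl⟩

/-- Left pairing map: `f ↦ (m ↦ f(m)/|J| mod ℤ)` on invariants. -/
noncomputable def pairL (f : ↥(dualInvariants J M)) :
    ↥(invariants J M) →+ AddCircle (1 : ℚ) :=
  (toQn J).comp (((f : M →+ ℤ)).comp (invariants J M).subtype)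

lemma pairL_norm_zero (f : ↥(dualInvariants J M)) :
    (normMapJ J M).range.addSubgroupOf (invariants J M) ≤ (pairL J M f).ker := by
  rintro ⟨m, hm⟩ hmem
  rw [AddSubgroup.mem_addSubgroupOf] at hmem
  obtain ⟨x, hx⟩ := hmem
  rw [AddMonoidHom.mem_ker]
  show toQn J ((f : M →+ ℤ) m) = 0
  have hx' : normMapJ J M x = m := hx
  rw [← hx', dualInvariant_normMapJ f.2, nsmul_eq_mul]
  exact toQn_card_mul J _

noncomputable def PhiAux : ↥(dualInvariants J M) →+
    ((↥(invariants J M) ⧸ ((normMapJ J M).range.addSubgroupOf (invariants J M))) →+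
      AddCircle (1 : ℚ)) :=
  AddMonoidHom.mk'
    (fun f => QuotientAddGroup.lift _ (pairL J M f) (pairL_norm_zero J M f))
    (by
      intro f g
      refine AddMonoidHom.ext fun a => ?_
      refine QuotientAddGroup.induction_on a (fun z => ?_)
      show toQn J (((f + g) : ↥(dualInvariants J M)).1 z.1) =
        toQn J (f.1 z.1) + toQn J (g.1 z.1)
      rw [show ((f + g) : ↥(dualInvariants J M)).1 z.1 = f.1 z.1 + g.1 z.1 from rfl, map_add])

noncomputable def Phi :
    (↥(dualInvariants J M) ⧸ ((dualNorm J M).range.addSubgroupOf (dualInvariants J M))) →+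
    ((↥(invariants J M) ⧸ ((normMapJ J M).range.addSubgroupOf (invariants J M))) →+
      AddCircle (1 : ℚ)) :=
  QuotientAddGroup.lift _ (PhiAux J M) (by
    rintro ⟨f, hf⟩ hmem
    rw [AddSubgroup.mem_addSubgroupOf] at hmem
    obtain ⟨g, hg⟩ := hmem
    rw [AddMonoidHom.mem_ker]
    refine AddMonoidHom.ext fun a => ?_
    refine QuotientAddGroup.induction_on a (fun z => ?_)
    show toQn J (f z.1) = 0
    have hg' : dualNorm J M g = f := hg
    rw [← hg', dualNorm_apply', normMapJ_of_invariant z.2, map_nsmul, nsmul_eq_mul]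
    exact toQn_card_mul J _)

/-- Right pairing map. -/
noncomputable def pairR (m : ↥(invariants J M)) :
    ↥(dualInvariants J M) →+ AddCircle (1 : ℚ) :=
  AddMonoidHom.mk' (fun f => toQn J (f.1 m.1)) (fun f g => by
    show toQn J ((f + g : ↥(dualInvariants J M)).1 m.1) = toQn J (f.1 m.1) + toQn J (g.1 m.1)
    rw [show ((f + g) : ↥(dualInvariants J M)).1 m.1 = f.1 m.1 + g.1 m.1 from rfl, map_add])

lemma pairR_norm_zero (m : ↥(invariants J M)) :
    (dualNorm J M).range.addSubgroupOf (dualInvariants J M) ≤ (pairR J M m).ker := by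
  rintro ⟨f, hf⟩ hmem
  rw [AddSubgroup.mem_addSubgroupOf] at hmem
  obtain ⟨g, hg⟩ := hmem
  rw [AddMonoidHom.mem_ker]
  show toQn J (f m.1) = 0
  have hg' : dualNorm J M g = f := hg
  rw [← hg', dualNorm_apply', normMapJ_of_invariant m.2, map_nsmul, nsmul_eq_mul]
  exact toQn_card_mul J _

noncomputable def PsiAux : ↥(invariants J M) →+
    ((↥(dualInvariants J M) ⧸ ((dualNorm J M).range.addSubgroupOf (dualInvariants J M))) →+
      AddCircle (1 : ℚ)) :=
  AddMonoidHom.mk'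
    (fun m => QuotientAddGroup.lift _ (pairR J M m) (pairR_norm_zero J M m))
    (by
      intro m m'
      refine AddMonoidHom.ext fun a => ?_
      refine QuotientAddGroup.induction_on a (fun f => ?_)
      show toQn J (f.1 ((m + m' : ↥(invariants J M)).1)) =
        toQn J (f.1 m.1) + toQn J (f.1 m'.1)
      rw [show ((m + m') : ↥(invariants J M)).1 = m.1 + m'.1 from rfl, map_add, map_add])

noncomputable def Psi :
    (↥(invariants J M) ⧸ ((normMapJ J M).range.addSubgroupOf (invariants J M))) →+
    ((↥(dualInvariants J M) ⧸ ((dualNorm J M).range.addSubgroupOf (dualInvariants J M))) →+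
      AddCircle (1 : ℚ)) :=
  QuotientAddGroup.lift _ (PsiAux J M) (by
    rintro ⟨m, hm⟩ hmem
    rw [AddSubgroup.mem_addSubgroupOf] at hmem
    obtain ⟨x, hx⟩ := hmem
    rw [AddMonoidHom.mem_ker]
    refine AddMonoidHom.ext fun a => ?_
    refine QuotientAddGroup.induction_on a (fun f => ?_)
    show toQn J (f.1 m) = 0
    have hx' : normMapJ J M x = m := hx
    rw [← hx', dualInvariant_normMapJ f.2, nsmul_eq_mul]
    exact toQn_card_mul J _)

variable {J M} in
lemma nsmul_of_dualInvariant {f : M →+ ℤ} (hf : f ∈ dualInvariants J M) :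
    dualNorm J M f = Fintype.card J • f := by
  ext x
  rw [dualNorm_apply', dualInvariant_normMapJ hf]
  simp

section FinFree2

variable [Module.Finite ℤ M] [Module.Free ℤ M]

lemma Phi_injective : Function.Injective (Phi J M) := by
  rw [injective_iff_map_eq_zero]
  intro β hβ
  obtain ⟨f, rfl⟩ := QuotientAddGroup.mk'_surjective _ β
  rw [QuotientAddGroup.mk'_apply, QuotientAddGroup.eq_zero_iff, AddSubgroup.mem_addSubgroupOf]
  apply mem_dualNorm_range f.2
  intro m hm
  have h1 := DFunLike.congr_fun hβ
    (QuotientAddGroup.mk (⟨m, hm⟩ : ↥(invariants J M)))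
  have h2 : toQn J (f.1 m) = 0 := h1
  exact (toQn_eq_zero_iff J _).mp h2

lemma Psi_injective : Function.Injective (Psi J M) := by
  rw [injective_iff_map_eq_zero]
  intro α hα
  obtain ⟨m, rfl⟩ := QuotientAddGroup.mk'_surjective _ α
  rw [QuotientAddGroup.mk'_apply, QuotientAddGroup.eq_zero_iff, AddSubgroup.mem_addSubgroupOf]
  apply mem_normMapJ_range m.2
  intro f hf
  have h1 := DFunLike.congr_fun hα
    (QuotientAddGroup.mk (⟨f, hf⟩ : ↥(dualInvariants J M)))
  have h2 : toQn J (f m.1) = 0 := h1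
  exact (toQn_eq_zero_iff J _).mp h2

end FinFree2

end Pairing

section Final

variable (J M : Type) [Group J] [Fintype J] [AddCommGroup M] [DistribMulAction J M]
variable [Module.Finite ℤ M] [Module.Free ℤ M]

lemma finite_tateA :
    Finite (↥(invariants J M) ⧸ ((normMapJ J M).range.addSubgroupOf (invariants J M))) := by
  haveI : IsNoetherian ℤ M := isNoetherian_of_isNoetherianRing_of_finite ℤ M
  have hfg : Module.Finite ℤ ↥(AddSubgroup.toIntSubmodule (invariants J M)) :=
    Module.Finite.iff_fg.mpr (IsNoetherian.noetherian _)
  haveI : AddGroup.FG ↥(invariants J M) := Module.Finite.iff_addGroup_fg.mp hfg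
  haveI : AddGroup.FG
      (↥(invariants J M) ⧸ ((normMapJ J M).range.addSubgroupOf (invariants J M))) :=
    AddGroup.fg_of_surjective (QuotientAddGroup.mk'_surjective _)
  apply AddCommGroup.finite_of_fg_torsion
  intro a
  obtain ⟨⟨m, hm⟩, rfl⟩ := QuotientAddGroup.mk'_surjective _ a
  rw [isOfFinAddOrder_iff_nsmul_eq_zero]
  refine ⟨Fintype.card J, Fintype.card_pos, ?_⟩
  rw [← map_nsmul, QuotientAddGroup.mk'_apply, QuotientAddGroup.eq_zero_iff,
    AddSubgroup.mem_addSubgroupOf]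
  have hcoe : ((Fintype.card J • (⟨m, hm⟩ : ↥(invariants J M)) : ↥(invariants J M)) : M)
      = Fintype.card J • m := by simp
  rw [hcoe]
  exact ⟨m, normMapJ_of_invariant hm⟩

lemma finite_tateB :
    Finite (↥(dualInvariants J M) ⧸ ((dualNorm J M).range.addSubgroupOf (dualInvariants J M))) := by
  haveI : Module.Finite ℤ (M →ₗ[ℤ] ℤ) := Module.Finite.linearMap ℤ ℤ M ℤ
  haveI : Module.Finite ℤ (M →+ ℤ) := Module.Finite.equiv (addMonoidHomLequivInt (A := M) (B := ℤ) ℤ).symm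
  haveI : IsNoetherian ℤ (M →+ ℤ) := isNoetherian_of_isNoetherianRing_of_finite ℤ (M →+ ℤ)
  have hfg : Module.Finite ℤ ↥(AddSubgroup.toIntSubmodule (dualInvariants J M)) :=
    Module.Finite.iff_fg.mpr (IsNoetherian.noetherian _)
  haveI : AddGroup.FG ↥(dualInvariants J M) := Module.Finite.iff_addGroup_fg.mp hfg
  haveI : AddGroup.FG
      (↥(dualInvariants J M) ⧸ ((dualNorm J M).range.addSubgroupOf (dualInvariants J M))) :=
    AddGroup.fg_of_surjective (QuotientAddGroup.mk'_surjective _)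
  apply AddCommGroup.finite_of_fg_torsion
  intro a
  obtain ⟨⟨f, hf⟩, rfl⟩ := QuotientAddGroup.mk'_surjective _ a
  rw [isOfFinAddOrder_iff_nsmul_eq_zero]
  refine ⟨Fintype.card J, Fintype.card_pos, ?_⟩
  rw [← map_nsmul, QuotientAddGroup.mk'_apply, QuotientAddGroup.eq_zero_iff,
    AddSubgroup.mem_addSubgroupOf]
  have hcoe : ((Fintype.card J • (⟨f, hf⟩ : ↥(dualInvariants J M)) : ↥(dualInvariants J M)) : M →+ ℤ)
      = Fintype.card J • f := by simp
  rw [hcoe]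
  exact ⟨f, nsmul_of_dualInvariant hf⟩

end Final

/-- Let `J` be a finite group and `M` a finitely generated `J`-module which is free as a
`ℤ`-module. Then the zeroth Tate cohomology groups `Ĥ⁰(J,M) = M^J/NM` and
`Ĥ⁰(J,M^∨) = (M^∨)^J/N(M^∨)` are finite, and the Pontryagin dual of the former is
isomorphic to the latter. -/
theorem tateH0_dual_iso [Module.Finite ℤ M] [Module.Free ℤ M] :
    Finite ((invariants J M) ⧸ ((normMapJ J M).range.addSubgroupOf (invariants J M))) ∧
    Finite ((dualInvariants J M) ⧸ ((dualNorm J M).range.addSubgroupOf (dualInvariants J M))) ∧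
    Nonempty
      ((((invariants J M) ⧸ ((normMapJ J M).range.addSubgroupOf (invariants J M))) →+
          AddCircle (1 : ℚ)) ≃+
        ((dualInvariants J M) ⧸ ((dualNorm J M).range.addSubgroupOf (dualInvariants J M)))) := by
  haveI hA := finite_tateA J M
  haveI hB := finite_tateB J M
  refine ⟨hA, hB, ?_⟩
  obtain ⟨hfinA', hcardA⟩ := card_char_eq
    (↥(invariants J M) ⧸ ((normMapJ J M).range.addSubgroupOf (invariants J M)))
  obtain ⟨hfinB', hcardB⟩ := card_char_eq
    (↥(dualInvariants J M) ⧸ ((dualNorm J M).range.addSubgroupOf (dualInvariants J M)))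
  haveI := hfinA'
  haveI := hfinB'
  have h1 : Nat.card
      (↥(dualInvariants J M) ⧸ ((dualNorm J M).range.addSubgroupOf (dualInvariants J M))) ≤
      Nat.card (↥(invariants J M) ⧸ ((normMapJ J M).range.addSubgroupOf (invariants J M))) :=
    le_trans (Nat.card_le_card_of_injective _ (Phi_injective J M)) (le_of_eq hcardA)
  have h2 : Nat.card
      (↥(invariants J M) ⧸ ((normMapJ J M).range.addSubgroupOf (invariants J M))) ≤
      Nat.card (↥(dualInvariants J M) ⧸ ((dualNorm J M).range.addSubgroupOf (dualInvariants J M))) :=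
    le_trans (Nat.card_le_card_of_injective _ (Psi_injective J M)) (le_of_eq hcardB)
  have hbij : Function.Bijective (Phi J M) := by
    rw [Nat.bijective_iff_injective_and_card]
    exact ⟨Phi_injective J M, by rw [le_antisymm h1 h2, hcardA]⟩
  exact ⟨(AddEquiv.ofBijective (Phi J M) hbij).symm⟩
end

section
/- Let M be an abelian group and σ an automorphism of M such that every element of M is fixed by some positive power of σ (i.e., for every x ∈ M there exists r ≥ 1 with σ^r x = x). Let M' = {x ∈ M : there exists n ≥ 1 with (1 + σ + ⋯ + σ^{n-1})x = 0}. Then (σ−1)M ⊆ M', and the image of M' in the quotient M/(σ−1)M is exactly the torsion subgroup of M/(σ−1)M; that is, M'/(σ−1)M = (M/(σ−1)M)_{tors}. -/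
/-- The subgroup `(σ−1)M = {σy − y : y ∈ M}` of `M`, i.e. the range of the endomorphism
`σ − 1` of `M`. -/
def sigmaSubOneRange (M : Type) [AddCommGroup M] (σ : AddAut M) : AddSubgroup M :=
  (σ.toAddMonoidHom - AddMonoidHom.id M).range

/-- The set `M' = {x ∈ M | ∃ n ≥ 1, (1 + σ + ⋯ + σ^{n-1}) x = 0}`. -/
def normKilled (M : Type) [AddCommGroup M] (σ : AddAut M) : Set M :=
  {x | ∃ n : ℕ, 1 ≤ n ∧ ∑ i ∈ Finset.range n, (i • σ) x = 0}

section Aux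
variable {M : Type} [AddCommGroup M] (σ : AddAut M)

private lemma telescope_aux (y : M) (r : ℕ) :
    ∑ i ∈ Finset.range r, (i • σ) (σ y - y) = (r • σ) y - y := by
  have h : ∀ i, (i • σ) (σ y - y) = ((i+1) • σ) y - (i • σ) y := by
    intro i
    rw [map_sub, succ_nsmul, AddAut.add_apply]
  simp only [h]
  simpa using Finset.sum_range_sub (fun i => (i • σ) y) r

private lemma fix_mul_aux (x : M) (r : ℕ) (hx : (r • σ) x = x) (k : ℕ) :
    ((k * r) • σ) x = x := by
  induction k with
  | zero => simp
  | succ k ih => rw [Nat.succ_mul, add_nsmul, AddAut.add_apply, hx, ih]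

private lemma mem_range_iff_aux (x : M) : x ∈ sigmaSubOneRange M σ ↔ ∃ y, σ y - y = x := by
  simp [sigmaSubOneRange, AddMonoidHom.mem_range, AddMonoidHom.sub_apply]

private lemma pow_sub_mem_aux (x : M) (i : ℕ) : (i • σ) x - x ∈ sigmaSubOneRange M σ := by
  rw [mem_range_iff_aux]
  exact ⟨∑ j ∈ Finset.range i, (j • σ) x, by
    rw [map_sum, ← Finset.sum_sub_distrib]
    have h : ∀ j, σ ((j • σ) x) - (j • σ) x = ((j+1) • σ) x - (j • σ) x := by
      intro j; rw [succ_nsmul', AddAut.add_apply]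
    simp only [h]
    simpa using Finset.sum_range_sub (fun j => (j • σ) x) i⟩

end Aux

/-- Let `M` be an abelian group and `σ` an automorphism of `M` such that every element of `M`
is fixed by some positive power of `σ`. Let `M' = {x | ∃ n ≥ 1, (1 + σ + ⋯ + σ^{n-1})x = 0}`.
Then `(σ−1)M ⊆ M'`, and the image of `M'` in the quotient `M/(σ−1)M` is exactly the torsion
subgroup of `M/(σ−1)M`. -/
theorem normKilled_image_eq_torsion (M : Type) [AddCommGroup M] (σ : AddAut M)
    (h : ∀ x : M, ∃ r : ℕ, 1 ≤ r ∧ (r • σ) x = x) :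
    (∀ y : M, σ y - y ∈ normKilled M σ) ∧
    QuotientAddGroup.mk '' normKilled M σ =
      {x : M ⧸ sigmaSubOneRange M σ | IsOfFinAddOrder x} := by
  constructor
  · intro y
    obtain ⟨r, hr1, hr⟩ := h y
    exact ⟨r, hr1, by rw [telescope_aux, hr, sub_self]⟩
  · ext q
    constructor
    · rintro ⟨x, ⟨n, hn1, hsum⟩, rfl⟩
      rw [Set.mem_setOf_eq, isOfFinAddOrder_iff_nsmul_eq_zero]
      refine ⟨n, hn1, ?_⟩
      have hmk : (n • (QuotientAddGroup.mk x : M ⧸ sigmaSubOneRange M σ)) =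
          QuotientAddGroup.mk (n • x) := rfl
      rw [hmk, QuotientAddGroup.eq_zero_iff]
      have hx : n • x = ∑ i ∈ Finset.range n, (x - (i • σ) x) := by
        rw [Finset.sum_sub_distrib, hsum, sub_zero, Finset.sum_const, Finset.card_range]
      rw [hx]
      exact AddSubgroup.sum_mem _ fun i _ => by
        have := (sigmaSubOneRange M σ).neg_mem (pow_sub_mem_aux σ x i)
        simpa using this
    · intro hq
      obtain ⟨x, rfl⟩ := QuotientAddGroup.mk_surjective q
      rw [Set.mem_setOf_eq, isOfFinAddOrder_iff_nsmul_eq_zero] at hq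
      obtain ⟨m, hm1, hm⟩ := hq
      have hmx : m • x ∈ sigmaSubOneRange M σ := by
        rw [← QuotientAddGroup.eq_zero_iff]
        exact hm
      rw [mem_range_iff_aux] at hmx
      obtain ⟨y, hy⟩ := hmx
      obtain ⟨r, hr1, hrx⟩ := h x
      obtain ⟨s, hs1, hsy⟩ := h y
      set R := r * s with hR
      have hRx : (R • σ) x = x := by
        rw [hR, mul_comm]; exact fix_mul_aux σ x r hrx s
      have hRy : (R • σ) y = y := fix_mul_aux σ y s hsy r
      set T := ∑ i ∈ Finset.range R, (i • σ) x with hT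
      have hmT : m • T = 0 := by
        rw [hT, Finset.smul_sum]
        have : ∀ i : ℕ, m • (i • σ) x = (i • σ) (σ y - y) := by
          intro i; rw [← map_nsmul, ← hy]
        simp only [this]
        rw [telescope_aux, hRy, sub_self]
      have hblock : ∀ k : ℕ, ∑ i ∈ Finset.range (k * R), (i • σ) x = k • T := by
        intro k
        induction k with
        | zero => simp
        | succ k ih =>
          rw [Nat.succ_mul, Finset.sum_range_add, ih, succ_nsmul]
          congr 1
          rw [hT]
          refine Finset.sum_congr rfl fun i _ => ?_
          rw [add_comm (k * R) i, add_nsmul, AddAut.add_apply, fix_mul_aux σ x R hRx k]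
      refine ⟨x, ⟨m * R, ?_, ?_⟩, rfl⟩
      · exact Nat.one_le_iff_ne_zero.mpr (by positivity)
      · rw [hblock m, hmT]
end
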